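/- arXiv:1007.4150 — 6 statements merged into one kernel-verified Lean document; each statement's English description precedes it below -/
import Mathlib

section
/- Let r > 2 and n > r be integers, and let δ = cp(n-1, r-1)/cp(n, r) (a positive rational number). Then cp(n, r) · C(δn, r) ≤ C(n, r), where for a real number x and positive integer r, C(x, r) denotes the generalized binomial coefficient x(x-1)···(x-r+1)/r!. -/
/-- A clique partition of the `r`-element subsets of `[n]`: a collection of
proper subsets of `[n]` such that every `r`-element subset is contained in
exactly one member. -/
def IsCliquePartition (n r : ℕ) (P : Finset (Finset (Fin n))) : Prop :=
  (∀ A ∈ P, A ≠ Finset.univ) ∧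
  ∀ S : Finset (Fin n), S.card = r → ∃! A, A ∈ P ∧ S ⊆ A

/-- `cp n r` is the minimum size of a clique partition of the `r`-subsets of `[n]`. -/
noncomputable def cp (n r : ℕ) : ℕ :=
  sInf {t | ∃ P : Finset (Finset (Fin n)), IsCliquePartition n r P ∧ P.card = t}

/-- Generalized binomial coefficient `C(x, r) = x(x-1)⋯(x-r+1)/r!` for real `x`. -/
noncomputable def rbinom (x : ℝ) (r : ℕ) : ℝ :=
  (∏ i ∈ Finset.range r, (x - i)) / (Nat.factorial r)

/-! ### Auxiliary lemmas -/

/-- Truncated falling-factorial product. -/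
noncomputable def Hfun (m : ℕ) (x : ℝ) : ℝ := ∏ i ∈ Finset.range m, max (x - i) 0

lemma Hfun_nonneg (m : ℕ) (x : ℝ) : 0 ≤ Hfun m x :=
  Finset.prod_nonneg fun _ _ => le_max_right _ _

lemma Hfun_mono (m : ℕ) : Monotone (Hfun m) := by
  intro a b hab
  exact Finset.prod_le_prod (fun i _ => le_max_right _ _)
    (fun i _ => max_le_max (by linarith) le_rfl)

lemma affine_convex (c : ℝ) : ConvexOn ℝ Set.univ (fun x : ℝ => x - c) := by
  refine ⟨convex_univ, fun x _ y _ a b ha hb hab => ?_⟩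
  simp only [smul_eq_mul]
  have h : a * (x - c) + b * (y - c) = a * x + b * y - (a + b) * c := by ring
  rw [h, hab]; simp

lemma Hfun_convex (m : ℕ) : ConvexOn ℝ Set.univ (Hfun m) := by
  induction m with
  | zero =>
    have h0 : Hfun 0 = fun _ => (1 : ℝ) := by funext x; simp [Hfun]
    rw [h0]; exact convexOn_const (1 : ℝ) convex_univ
  | succ m ih =>
    have hfactor : ConvexOn ℝ Set.univ (fun x : ℝ => max (x - m) 0) :=
      (affine_convex m).sup (convexOn_const (0 : ℝ) convex_univ)
    have hmono : MonovaryOn (Hfun m) (fun x : ℝ => max (x - m) 0) Set.univ := by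
      intro i _ j _ hij
      refine Hfun_mono m ?_
      by_contra hle
      push_neg at hle
      exact absurd (max_le_max (by linarith : j - (m:ℝ) ≤ i - m) le_rfl) (not_le.2 hij)
    have := ih.mul hfactor (fun x _ => Hfun_nonneg m x)
      (fun x _ => le_max_right _ _) hmono
    have heq : Hfun (m+1) = Hfun m * fun x : ℝ => max (x - m) 0 := by
      ext x
      simp [Hfun, Finset.prod_range_succ]
    rw [heq]; exact this

lemma prod_range_cast_sub (a r : ℕ) :
    ∏ i ∈ Finset.range r, ((a : ℝ) - i) = (a.descFactorial r : ℝ) := by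
  induction r with
  | zero => simp
  | succ r ih =>
    rw [Finset.prod_range_succ, ih, Nat.descFactorial_succ]
    rcases lt_or_ge a r with h | h
    · rw [Nat.descFactorial_eq_zero_iff_lt.2 h]; simp
    · push_cast [Nat.cast_sub h]; ring

lemma rbinom_nat (a r : ℕ) : rbinom (a : ℝ) r = (a.choose r : ℝ) := by
  rw [rbinom, prod_range_cast_sub, Nat.descFactorial_eq_factorial_mul_choose]
  push_cast
  rw [mul_comm, mul_div_assoc, div_self (by positivity : ((r.factorial : ℝ)) ≠ 0), mul_one]

lemma Hfun_nat_le (a r : ℕ) :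
    Hfun r ((a : ℕ) : ℝ) ≤ (r.factorial : ℝ) * (a.choose r : ℝ) := by
  rcases lt_or_ge a r with h | h
  · have h0 : Hfun r ((a : ℕ) : ℝ) = 0 := by
      refine Finset.prod_eq_zero (Finset.mem_range.2 h) ?_
      simp
    rw [h0]; positivity
  · have h0 : Hfun r ((a : ℕ) : ℝ) = ∏ i ∈ Finset.range r, ((a : ℝ) - i) := by
      refine Finset.prod_congr rfl fun i hi => ?_
      have hi' := Finset.mem_range.1 hi
      have hia : (i : ℝ) ≤ a := by exact_mod_cast (by omega : i ≤ a)
      exact max_eq_left (by linarith)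
    rw [h0, prod_range_cast_sub, Nat.descFactorial_eq_factorial_mul_choose]
    push_cast
    exact le_rfl

/-- Generalized binomial coefficient bounded by 1 on `[0, r-1]`. -/
lemma rbinom_le_one_of_small (r : ℕ) (x : ℝ) (hx0 : 0 ≤ x) (hx1 : x ≤ (r : ℝ) - 1) :
    rbinom x r ≤ 1 := by
  have hfac : (0 : ℝ) < r.factorial := by positivity
  rw [rbinom, div_le_one hfac]
  calc ∏ i ∈ Finset.range r, (x - i) ≤ |∏ i ∈ Finset.range r, (x - i)| := le_abs_self _
    _ = ∏ i ∈ Finset.range r, |x - i| := Finset.abs_prod _ _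
    _ ≤ (r.factorial : ℝ) := ?_
  set k : ℕ := ⌊x⌋.toNat with hk
  have hkx : (k : ℝ) ≤ x := by
    rw [hk]
    have : ((⌊x⌋.toNat : ℤ) : ℝ) ≤ x := by
      rw [Int.toNat_of_nonneg (Int.floor_nonneg.2 hx0)]; exact Int.floor_le x
    exact_mod_cast this
  have hxk : x < (k : ℝ) + 1 := by
    rw [hk]
    have : x < ((⌊x⌋.toNat : ℤ) : ℝ) + 1 := by
      rw [Int.toNat_of_nonneg (Int.floor_nonneg.2 hx0)]; exact Int.lt_floor_add_one x
    exact_mod_cast this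
  have hkr : k + 1 ≤ r := by
    by_contra hc
    push_neg at hc
    have : (r : ℝ) ≤ (k : ℝ) := by exact_mod_cast (by omega : r ≤ k)
    linarith
  have hsplit : ∏ i ∈ Finset.range r, |x - i| =
      (∏ i ∈ Finset.Ico 0 (k+1), |x - i|) * ∏ i ∈ Finset.Ico (k+1) r, |x - i| := by
    rw [Finset.range_eq_Ico, ← Finset.prod_Ico_consecutive _ (Nat.zero_le (k+1)) hkr]
  rw [hsplit]
  have h1 : (∏ i ∈ Finset.Ico 0 (k+1), |x - i|) ≤ ((k+1).factorial : ℝ) := by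
    have hstep : (∏ i ∈ Finset.Ico 0 (k+1), |x - i|) ≤
        ∏ i ∈ Finset.Ico 0 (k+1), (((k:ℝ)+1) - i) := by
      refine Finset.prod_le_prod (fun i _ => abs_nonneg _) fun i hi => ?_
      have hik : i ≤ k := by have := (Finset.mem_Ico.1 hi).2; omega
      have hik' : (i : ℝ) ≤ k := by exact_mod_cast hik
      rw [abs_of_nonneg (by linarith)]
      linarith
    refine hstep.trans ?_
    rw [← Finset.range_eq_Ico]
    have hh := prod_range_cast_sub (k+1) (k+1)
    push_cast at hh ⊢
    rw [hh, Nat.descFactorial_self]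
  have h2 : (∏ i ∈ Finset.Ico (k+1) r, |x - i|) ≤ ((r - 1 - k).factorial : ℝ) := by
    have hstep : (∏ i ∈ Finset.Ico (k+1) r, |x - i|) ≤
        ∏ i ∈ Finset.Ico (k+1) r, ((i:ℝ) - k) := by
      refine Finset.prod_le_prod (fun i _ => abs_nonneg _) fun i hi => ?_
      have hik : k + 1 ≤ i := (Finset.mem_Ico.1 hi).1
      have hik' : (k : ℝ) + 1 ≤ i := by exact_mod_cast hik
      rw [abs_of_nonpos (by linarith), neg_sub]
      linarith
    refine hstep.trans ?_
    rw [Finset.prod_Ico_eq_prod_range]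
    have hcongr : ∀ j ∈ Finset.range (r - (k+1)), ((k+1+j : ℕ) : ℝ) - k = ((j+1 : ℕ) : ℝ) := by
      intro j _; push_cast; ring
    rw [Finset.prod_congr rfl hcongr, ← Nat.cast_prod,
      Finset.prod_range_add_one_eq_factorial]
    have : r - (k+1) = r - 1 - k := by omega
    rw [this]
  calc (∏ i ∈ Finset.Ico 0 (k+1), |x - i|) * ∏ i ∈ Finset.Ico (k+1) r, |x - i|
      ≤ ((k+1).factorial : ℝ) * ((r - 1 - k).factorial : ℝ) :=
        mul_le_mul h1 h2 (Finset.prod_nonneg fun _ _ => abs_nonneg _) (by positivity)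
    _ ≤ (r.factorial : ℝ) := by
        have hd := Nat.factorial_mul_factorial_dvd_factorial_add (k+1) (r-1-k)
        have heq : k + 1 + (r - 1 - k) = r := by omega
        rw [heq] at hd
        exact_mod_cast Nat.le_of_dvd r.factorial_pos hd

/-! ### Combinatorial auxiliary lemmas -/

lemma trivial_partition (n r : ℕ) (hrn : r < n) :
    IsCliquePartition n r (Finset.univ.powersetCard r : Finset (Finset (Fin n))) := by
  constructor
  · intro A hA hAu
    have : A.card = r := (Finset.mem_powersetCard_univ).1 hA
    rw [hAu, Finset.card_univ, Fintype.card_fin] at this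
    omega
  · intro S hS
    refine ⟨S, ⟨Finset.mem_powersetCard_univ.2 hS, subset_rfl⟩, ?_⟩
    rintro A ⟨hA, hSA⟩
    have hAc : A.card = r := Finset.mem_powersetCard_univ.1 hA
    exact (Finset.eq_of_subset_of_card_le hSA (by omega)).symm

lemma cp_le_choose (n r : ℕ) (hrn : r < n) : cp n r ≤ n.choose r := by
  apply Nat.sInf_le
  refine ⟨_, trivial_partition n r hrn, ?_⟩
  rw [Finset.card_powersetCard, Finset.card_univ, Fintype.card_fin]

lemma cpset_nonempty (n r : ℕ) (hrn : r < n) :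
    {t | ∃ P : Finset (Finset (Fin n)), IsCliquePartition n r P ∧ P.card = t}.Nonempty :=
  ⟨_, _, trivial_partition n r hrn, rfl⟩

/-- Sum over the partition of `choose (card A) r` equals `choose n r`. -/
lemma sum_choose_eq (n r : ℕ) (P : Finset (Finset (Fin n)))
    (hP : IsCliquePartition n r P) :
    ∑ A ∈ P, (A.card).choose r = n.choose r := by
  classical
  have hdisj : ∀ A ∈ P, ∀ B ∈ P, A ≠ B →
      Disjoint (A.powersetCard r) (B.powersetCard r) := by
    intro A hA B hB hAB
    rw [Finset.disjoint_left]
    intro S hSA hSB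
    have h1 := Finset.mem_powersetCard.1 hSA
    have h2 := Finset.mem_powersetCard.1 hSB
    obtain ⟨C, _, hC⟩ := hP.2 S h1.2
    exact hAB ((hC A ⟨hA, h1.1⟩).trans (hC B ⟨hB, h2.1⟩).symm)
  have hunion : P.biUnion (fun A => A.powersetCard r) = Finset.univ.powersetCard r := by
    ext S
    simp only [Finset.mem_biUnion, Finset.mem_powersetCard]
    constructor
    · rintro ⟨A, _, _, hcard⟩; exact ⟨Finset.subset_univ S, hcard⟩
    · rintro ⟨-, hcard⟩
      obtain ⟨A, ⟨hA, hSA⟩, -⟩ := hP.2 S hcard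
      exact ⟨A, hA, hSA, hcard⟩
  calc ∑ A ∈ P, (A.card).choose r = ∑ A ∈ P, (A.powersetCard r).card := by
        refine Finset.sum_congr rfl fun A _ => ?_
        rw [Finset.card_powersetCard]
    _ = (P.biUnion (fun A => A.powersetCard r)).card := (Finset.card_biUnion hdisj).symm
    _ = n.choose r := by
        rw [hunion, Finset.card_powersetCard, Finset.card_univ, Fintype.card_fin]

/-- Double counting of incidences. -/
lemma sum_card_eq (n : ℕ) (P : Finset (Finset (Fin n))) :
    ∑ A ∈ P, A.card = ∑ v : Fin n, (P.filter (fun A => v ∈ A)).card := by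
  classical
  have h1 : ∀ A : Finset (Fin n), A.card = ∑ v : Fin n, if v ∈ A then 1 else 0 := by
    intro A
    rw [← Finset.card_filter]
    congr 1
    ext v; simp
  have h2 : ∀ v : Fin n, (P.filter (fun A => v ∈ A)).card = ∑ A ∈ P, if v ∈ A then 1 else 0 :=
    fun v => Finset.card_filter _ _
  simp only [h1, h2]
  exact Finset.sum_comm

/-- The link of a vertex yields a clique partition one dimension down. -/
lemma degree_bound (m q : ℕ) (P : Finset (Finset (Fin (m + 1))))
    (hP : IsCliquePartition (m + 1) (q + 1) P) (v : Fin (m + 1)) :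
    cp m q ≤ (P.filter (fun A => v ∈ A)).card := by
  classical
  set emb : Fin m ↪ Fin (m + 1) := v.succAboveEmb with hemb
  set Ψ : Finset (Fin (m + 1)) → Finset (Fin m) :=
    fun B => B.preimage v.succAbove (fun a _ b _ h => Fin.succAbove_right_injective h) with hΨ
  have memΨ : ∀ (B : Finset (Fin (m+1))) (x : Fin m), x ∈ Ψ B ↔ v.succAbove x ∈ B := by
    intro B x; simp only [hΨ]; exact Finset.mem_preimage
  set Q : Finset (Finset (Fin m)) := (P.filter (fun A => v ∈ A)).image Ψ with hQ
  have hQcp : IsCliquePartition m q Q := by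
    constructor
    · rintro B hB hBu
      rw [hQ, Finset.mem_image] at hB
      obtain ⟨A, hA, rfl⟩ := hB
      rw [Finset.mem_filter] at hA
      refine hP.1 A hA.1 ?_
      ext y
      simp only [Finset.mem_univ, iff_true]
      rcases eq_or_ne y v with rfl | hy
      · exact hA.2
      · obtain ⟨z, hz⟩ := Fin.exists_succAbove_eq hy
        have hz' : z ∈ Ψ A := by rw [hBu]; exact Finset.mem_univ z
        rw [memΨ, hz] at hz'
        exact hz'
    · intro S hS
      set T : Finset (Fin (m+1)) := insert v (S.map emb) with hT
      have hvT : v ∉ S.map emb := by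
        simp only [Finset.mem_map]
        rintro ⟨z, -, hz⟩
        exact Fin.succAbove_ne v z hz
      have hTcard : T.card = q + 1 := by
        rw [hT, Finset.card_insert_of_notMem hvT, Finset.card_map, hS]
      obtain ⟨A, ⟨hA, hTA⟩, hAuniq⟩ := hP.2 T hTcard
      have hvA : v ∈ A := hTA (Finset.mem_insert_self v _)
      refine ⟨Ψ A, ⟨?_, ?_⟩, ?_⟩
      · rw [hQ, Finset.mem_image]
        exact ⟨A, Finset.mem_filter.2 ⟨hA, hvA⟩, rfl⟩
      · intro z hz
        rw [memΨ]
        refine hTA ?_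
        rw [hT]
        exact Finset.mem_insert_of_mem (Finset.mem_map_of_mem emb hz)
      · rintro B ⟨hB, hSB⟩
        rw [hQ, Finset.mem_image] at hB
        obtain ⟨A', hA', rfl⟩ := hB
        rw [Finset.mem_filter] at hA'
        have hTA' : T ⊆ A' := by
          rw [hT]
          intro y hy
          rcases Finset.mem_insert.1 hy with rfl | hy
          · exact hA'.2
          · rw [Finset.mem_map] at hy
            obtain ⟨z, hz, rfl⟩ := hy
            have hmem := hSB hz
            rw [memΨ] at hmem
            exact hmem
        rw [hAuniq A' ⟨hA'.1, hTA'⟩]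
  calc cp m q ≤ Q.card := Nat.sInf_le ⟨Q, hQcp, rfl⟩
    _ ≤ (P.filter (fun A => v ∈ A)).card := Finset.card_image_le

/-- for integers `r > 2`, `n > r`, with
`δ = cp(n-1, r-1)/cp(n, r)`, we have `cp(n, r) · C(δn, r) ≤ C(n, r)`. -/
theorem cliquePartition_lower_recursion (n r : ℕ) (hr : 2 < r) (hn : r < n)
    (δ : ℝ) (hδ : δ = (cp (n - 1) (r - 1) : ℝ) / (cp n r : ℝ)) :
    (cp n r : ℝ) * rbinom (δ * n) r ≤ rbinom (n : ℝ) r := by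
  classical
  obtain ⟨m, rfl⟩ : ∃ m, n = m + 1 := ⟨n - 1, by omega⟩
  obtain ⟨q, rfl⟩ : ∃ q, r = q + 1 := ⟨r - 1, by omega⟩
  simp only [Nat.add_sub_cancel] at hδ
  -- an optimal partition
  obtain ⟨P, hP, hPcard⟩ :
      ∃ P : Finset (Finset (Fin (m+1))), IsCliquePartition (m+1) (q+1) P ∧
        P.card = cp (m+1) (q+1) :=
    Nat.sInf_mem (cpset_nonempty (m+1) (q+1) hn)
  set t := cp (m+1) (q+1) with ht
  set c := cp m q with hc
  -- positivity of t
  have ht0 : 0 < t := by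
    obtain ⟨S, -, hS⟩ := Finset.exists_subset_card_eq
      (show q+1 ≤ (Finset.univ : Finset (Fin (m+1))).card by
        rw [Finset.card_univ, Fintype.card_fin]; omega)
    obtain ⟨A, ⟨hA, -⟩, -⟩ := hP.2 S hS
    rw [← hPcard]
    exact Finset.card_pos.2 ⟨A, hA⟩
  have htR : (0:ℝ) < t := by exact_mod_cast ht0
  have hδ0 : 0 ≤ δ := by rw [hδ]; positivity
  have htδ : (t : ℝ) * δ = c := by
    rw [hδ]; field_simp
  have hchoose : rbinom ((m+1 : ℕ) : ℝ) (q+1) = ((m+1).choose (q+1) : ℝ) :=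
    rbinom_nat (m+1) (q+1)
  rcases le_or_gt (δ * ((m+1 : ℕ) : ℝ)) (((q+1 : ℕ) : ℝ) - 1) with hcase | hcase
  · -- small case: rbinom ≤ 1 and t ≤ choose
    have h1 : rbinom (δ * ((m+1 : ℕ) : ℝ)) (q+1) ≤ 1 :=
      rbinom_le_one_of_small (q+1) _ (by positivity) hcase
    have h2 : (t : ℝ) ≤ ((m+1).choose (q+1) : ℝ) := by
      exact_mod_cast cp_le_choose (m+1) (q+1) hn
    calc (t : ℝ) * rbinom (δ * ((m+1 : ℕ) : ℝ)) (q+1) ≤ (t : ℝ) * 1 :=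
          mul_le_mul_of_nonneg_left h1 (le_of_lt htR)
      _ = (t : ℝ) := mul_one _
      _ ≤ ((m+1).choose (q+1) : ℝ) := h2
      _ = rbinom ((m+1 : ℕ) : ℝ) (q+1) := hchoose.symm
  · -- main case
    set x : ℝ := δ * ((m+1 : ℕ) : ℝ) with hx
    have hHx : Hfun (q+1) x = ∏ i ∈ Finset.range (q+1), (x - i) := by
      refine Finset.prod_congr rfl fun i hi => ?_
      have hi' : i ≤ q := by have := Finset.mem_range.1 hi; omega
      have hi'' : (i : ℝ) ≤ q := by exact_mod_cast hi'
      have : ((q+1 : ℕ) : ℝ) - 1 = (q : ℝ) := by push_cast; ring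
      rw [this] at hcase
      exact max_eq_left (by linarith)
    set s := ∑ A ∈ P, A.card with hs
    have hsc : c * (m+1) ≤ s := by
      rw [hs, sum_card_eq]
      calc c * (m+1) = ∑ _v : Fin (m+1), c := by
            rw [Finset.sum_const, Finset.card_univ, Fintype.card_fin, smul_eq_mul, mul_comm]
        _ ≤ ∑ v : Fin (m+1), (P.filter (fun A => v ∈ A)).card :=
            Finset.sum_le_sum fun v _ => degree_bound m q P hP v
    have hscR : (c : ℝ) * ((m+1 : ℕ) : ℝ) ≤ (s : ℝ) := by exact_mod_cast hsc
    have hxs : x ≤ (s : ℝ) / t := by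
      rw [le_div_iff₀ htR]
      calc x * t = (t : ℝ) * δ * ((m+1 : ℕ) : ℝ) := by rw [hx]; ring
        _ = (c : ℝ) * ((m+1 : ℕ) : ℝ) := by rw [htδ]
        _ ≤ (s : ℝ) := hscR
    -- Jensen
    have hJ := (Hfun_convex (q+1)).map_sum_le (t := P) (w := fun _ => (t:ℝ)⁻¹)
      (p := fun A => ((A.card : ℕ) : ℝ)) (fun _ _ => by positivity)
      (by rw [Finset.sum_const, hPcard, nsmul_eq_mul, mul_inv_cancel₀ (ne_of_gt htR)])
      (fun _ _ => Set.mem_univ _)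
    simp only [smul_eq_mul] at hJ
    have hsum_pts : ∑ A ∈ P, (t:ℝ)⁻¹ * ((A.card : ℕ) : ℝ) = (s : ℝ) / t := by
      rw [← Finset.mul_sum, hs]
      push_cast
      rw [div_eq_inv_mul]
    rw [hsum_pts] at hJ
    have hfacpos : (0:ℝ) < ((q+1).factorial : ℝ) := by positivity
    have hkey : (t : ℝ) * Hfun (q+1) x ≤ ((q+1).factorial : ℝ) * ((m+1).choose (q+1) : ℝ) := by
      calc (t : ℝ) * Hfun (q+1) x ≤ (t : ℝ) * Hfun (q+1) ((s : ℝ) / t) :=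
            mul_le_mul_of_nonneg_left (Hfun_mono (q+1) hxs) (le_of_lt htR)
        _ ≤ (t : ℝ) * ∑ A ∈ P, (t:ℝ)⁻¹ * Hfun (q+1) ((A.card : ℕ) : ℝ) :=
            mul_le_mul_of_nonneg_left hJ (le_of_lt htR)
        _ = ∑ A ∈ P, Hfun (q+1) ((A.card : ℕ) : ℝ) := by
            rw [← Finset.mul_sum, ← mul_assoc, mul_inv_cancel₀ (ne_of_gt htR), one_mul]
        _ ≤ ∑ A ∈ P, ((q+1).factorial : ℝ) * ((A.card).choose (q+1) : ℝ) :=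
            Finset.sum_le_sum fun A _ => Hfun_nat_le A.card (q+1)
        _ = ((q+1).factorial : ℝ) * ((m+1).choose (q+1) : ℝ) := by
            rw [← Finset.mul_sum, ← Nat.cast_sum, sum_choose_eq (m+1) (q+1) P hP]
    rw [hchoose]
    have hrb : rbinom x (q+1) = Hfun (q+1) x / ((q+1).factorial : ℝ) := by
      rw [rbinom, hHx]
    rw [hrb]
    have heq : (t : ℝ) * (Hfun (q+1) x / ((q+1).factorial : ℝ)) =
        (t : ℝ) * Hfun (q+1) x / ((q+1).factorial : ℝ) := by ring
    rw [heq, div_le_iff₀ hfacpos]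
    nlinarith [hkey]
end

section
/- Let r ≥ 3 and n > r be integers, and let P be a clique partition of the r-element subsets of [n]. Then the sum over all cliques C ∈ P of |C| is at least n · cp(n-1, r-1). -/
/-- for `r ≥ 3`, `n > r`, any clique partition `P` of the
`r`-subsets of `[n]` satisfies `∑_{C ∈ P} |C| ≥ n · cp(n-1, r-1)`. -/
theorem sum_card_cliquePartition (n r : ℕ) (hr : 3 ≤ r) (hn : r < n)
    (P : Finset (Finset (Fin n))) (hP : IsCliquePartition n r P) :
    n * cp (n - 1) (r - 1) ≤ ∑ C ∈ P, C.card := by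
  obtain ⟨m, rfl⟩ : ∃ m, n = m + 1 := ⟨n - 1, (Nat.succ_pred_eq_of_pos (by omega)).symm⟩
  simp only [Nat.add_sub_cancel]
  obtain ⟨hproper, hcover⟩ := hP
  have key : ∀ v : Fin (m + 1), cp m (r - 1) ≤ (P.filter fun C => v ∈ C).card := by
    intro v
    set f : Finset (Fin (m + 1)) → Finset (Fin m) :=
      fun C => C.preimage v.succAbove (Fin.succAbove_right_injective.injOn) with hf
    have hQcard : ((P.filter fun C => v ∈ C).image f).card ≤ (P.filter fun C => v ∈ C).card :=
      Finset.card_image_le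
    refine le_trans (Nat.sInf_le ?_) hQcard
    refine ⟨(P.filter fun C => v ∈ C).image f, ⟨?_, ?_⟩, rfl⟩
    · intro B hB
      obtain ⟨C, hC, rfl⟩ := Finset.mem_image.1 hB
      rw [Finset.mem_filter] at hC
      intro hB'
      apply hproper C hC.1
      ext y
      simp only [Finset.mem_univ, iff_true]
      rcases eq_or_ne y v with rfl | hy
      · exact hC.2
      · obtain ⟨x, rfl⟩ := Fin.exists_succAbove_eq hy
        have : x ∈ f C := hB' ▸ Finset.mem_univ x
        simpa [f, Finset.mem_preimage] using this
    · intro S hS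
      set T : Finset (Fin (m + 1)) := insert v (S.image v.succAbove) with hT
      have hvT : v ∉ S.image v.succAbove := by
        simp only [Finset.mem_image, not_exists, not_and]
        intro x _ h
        exact Fin.succAbove_ne v x h
      have hTcard : T.card = r := by
        rw [hT, Finset.card_insert_of_notMem hvT,
          Finset.card_image_of_injective _ Fin.succAbove_right_injective, hS]
        omega
      obtain ⟨A, ⟨hA, hTA⟩, huniq⟩ := hcover T hTcard
      have hvA : v ∈ A := hTA (Finset.mem_insert_self v _)
      refine ⟨f A, ⟨Finset.mem_image_of_mem f (Finset.mem_filter.2 ⟨hA, hvA⟩), ?_⟩, ?_⟩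
      · intro x hx
        simp only [f, Finset.mem_preimage]
        exact hTA (Finset.mem_insert_of_mem (Finset.mem_image_of_mem _ hx))
      · rintro B ⟨hB, hSB⟩
        obtain ⟨C, hC, rfl⟩ := Finset.mem_image.1 hB
        rw [Finset.mem_filter] at hC
        have hTC : T ⊆ C := by
          intro y hy
          rcases Finset.mem_insert.1 hy with rfl | hy'
          · exact hC.2
          · obtain ⟨x, hx, rfl⟩ := Finset.mem_image.1 hy'
            have := hSB hx
            simpa [f, Finset.mem_preimage] using this
        rw [huniq C ⟨hC.1, hTC⟩]
  calc (m + 1) * cp m (r - 1) = ∑ _v : Fin (m + 1), cp m (r - 1) := by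
        simp [mul_comm]
    _ ≤ ∑ v : Fin (m + 1), (P.filter fun C => v ∈ C).card :=
        Finset.sum_le_sum fun v _ => key v
    _ = ∑ C ∈ P, C.card := by
        simp only [Finset.card_filter]
        rw [Finset.sum_comm]
        congr 1
        ext C
        simp [Finset.card_filter, Finset.filter_mem_eq_inter]
end

section
/- Let q be a prime power with q ≡ 3 (mod 4) and let F_q be the finite field with q elements. Then every three distinct non-collinear points of F_q × F_q lie in exactly one circle C(a, λ) with a ∈ F_q × F_q and λ ∈ F_q \ {0}; moreover, no three distinct collinear points of F_q × F_q lie on a common circle C(a, λ). -/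
/-- `p` lies on the circle with center `a` and radius `lam`. -/
def OnCircle {F : Type} [Field F] (a : F × F) (lam : F) (p : F × F) : Prop :=
  (p.1 - a.1) ^ 2 + (p.2 - a.2) ^ 2 = lam

/-- Three points of `F × F` are collinear: they lie on a common affine line
`{(x₁,x₂) : x₂ = b₁x₁ + b₂}` or `{(x₁,x₂) : x₁ = μ}`. -/
def Collin3 {F : Type} [Field F] (x y z : F × F) : Prop :=
  (∃ b₁ b₂ : F, x.2 = b₁ * x.1 + b₂ ∧ y.2 = b₁ * y.1 + b₂ ∧ z.2 = b₁ * z.1 + b₂) ∨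
  (∃ μ : F, x.1 = μ ∧ y.1 = μ ∧ z.1 = μ)

lemma collin_of_det {F : Type} [Field F] (x y z : F × F) (hxy : x ≠ y)
    (hdet : (y.1 - x.1) * (z.2 - x.2) - (y.2 - x.2) * (z.1 - x.1) = 0) :
    Collin3 x y z := by
  by_cases h1 : y.1 = x.1
  · by_cases h2 : z.1 = x.1
    · exact Or.inr ⟨x.1, rfl, h1, h2⟩
    · have hz : z.1 - x.1 ≠ 0 := sub_ne_zero.mpr h2
      have h3 : (y.2 - x.2) * (z.1 - x.1) = 0 := by
        rw [h1] at hdet; linear_combination -hdet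
      have h4 : y.2 = x.2 := sub_eq_zero.mp ((mul_eq_zero.mp h3).resolve_right hz)
      exact absurd (Prod.ext h1.symm h4.symm) hxy
  · have hy : y.1 - x.1 ≠ 0 := sub_ne_zero.mpr h1
    refine Or.inl ⟨(y.2 - x.2) / (y.1 - x.1), x.2 - (y.2 - x.2) / (y.1 - x.1) * x.1,
      by ring, ?_, ?_⟩
    · have key : (y.2 - x.2) / (y.1 - x.1) * (y.1 - x.1) = y.2 - x.2 :=
        div_mul_cancel₀ _ hy
      linear_combination -key
    · have key : (y.2 - x.2) / (y.1 - x.1) * (z.1 - x.1) = z.2 - x.2 := by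
        rw [div_mul_eq_mul_div, div_eq_iff hy]
        linear_combination -hdet
      linear_combination -key

lemma sq_add_sq_zero {F : Type} [Field F] (hns : ¬ IsSquare (-1 : F))
    {a b : F} (h : a ^ 2 + b ^ 2 = 0) : a = 0 ∧ b = 0 := by
  by_cases hb : b = 0
  · subst hb
    refine ⟨?_, rfl⟩
    have h2 : a ^ 2 = 0 := by linear_combination h
    exact pow_eq_zero_iff (n := 2) (by norm_num) |>.mp h2
  · exfalso
    apply hns
    refine ⟨a / b, ?_⟩
    field_simp
    linear_combination -h

/-- over `F_q` with `q ≡ 3 (mod 4)` a prime power, three distinct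
non-collinear points lie on exactly one circle `C(a, λ)` with `λ ≠ 0`, and no
three distinct collinear points lie on a common circle. -/
theorem three_points_unique_circle (q : ℕ) (hq : IsPrimePow q) (hq4 : q % 4 = 3)
    (F : Type) [Field F] [Fintype F] (hF : Fintype.card F = q)
    (x y z : F × F) (hxy : x ≠ y) (hxz : x ≠ z) (hyz : y ≠ z) :
    (¬ Collin3 x y z →
      ∃! c : (F × F) × F, c.2 ≠ 0 ∧
        OnCircle c.1 c.2 x ∧ OnCircle c.1 c.2 y ∧ OnCircle c.1 c.2 z) ∧
    (Collin3 x y z →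
      ¬ ∃ (a : F × F) (lam : F), lam ≠ 0 ∧
        OnCircle a lam x ∧ OnCircle a lam y ∧ OnCircle a lam z) := by
  classical
  have hns : ¬ IsSquare (-1 : F) := by
    rw [FiniteField.isSquare_neg_one_iff, hF]
    omega
  have hchar : ringChar F ≠ 2 := by
    intro h
    have := FiniteField.even_card_of_char_two (F := F) h
    omega
  have h2 : (2 : F) ≠ 0 := Ring.two_ne_zero hchar
  set A1 := y.1 - x.1 with hA1
  set A2 := y.2 - x.2 with hA2
  set B1 := z.1 - x.1 with hB1
  set B2 := z.2 - x.2 with hB2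
  set D := A1 * B2 - A2 * B1 with hD
  set E1 := (y.1 ^ 2 + y.2 ^ 2) - (x.1 ^ 2 + x.2 ^ 2) with hE1
  set E2 := (z.1 ^ 2 + z.2 ^ 2) - (x.1 ^ 2 + x.2 ^ 2) with hE2
  constructor
  · intro hnc
    have hDne : D ≠ 0 := fun h => hnc (collin_of_det x y z hxy h)
    have h2D : (2 : F) * D ≠ 0 := mul_ne_zero h2 hDne
    obtain ⟨a1, ha1⟩ : ∃ t : F, t = (E1 * B2 - E2 * A2) / (2 * D) := ⟨_, rfl⟩
    obtain ⟨a2, ha2⟩ : ∃ t : F, t = (A1 * E2 - B1 * E1) / (2 * D) := ⟨_, rfl⟩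
    obtain ⟨lam, hlam⟩ : ∃ t : F, t = (x.1 - a1) ^ 2 + (x.2 - a2) ^ 2 := ⟨_, rfl⟩
    have ea1 : a1 * (2 * D) = E1 * B2 - E2 * A2 := by
      rw [ha1]; exact div_mul_cancel₀ _ h2D
    have ea2 : a2 * (2 * D) = A1 * E2 - B1 * E1 := by
      rw [ha2]; exact div_mul_cancel₀ _ h2D
    have heq1 : 2 * A1 * a1 + 2 * A2 * a2 = E1 := by
      apply mul_right_cancel₀ h2D
      rw [hD]
      linear_combination (2 * A1) * ea1 + (2 * A2) * ea2
    have heq2 : 2 * B1 * a1 + 2 * B2 * a2 = E2 := by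
      apply mul_right_cancel₀ h2D
      rw [hD]
      linear_combination (2 * B1) * ea1 + (2 * B2) * ea2
    have hOx : OnCircle (a1, a2) lam x := hlam.symm
    have hOy : OnCircle (a1, a2) lam y := by
      show (y.1 - a1) ^ 2 + (y.2 - a2) ^ 2 = lam
      rw [hlam]
      linear_combination -heq1
    have hOz : OnCircle (a1, a2) lam z := by
      show (z.1 - a1) ^ 2 + (z.2 - a2) ^ 2 = lam
      rw [hlam]
      linear_combination -heq2
    have hlamne : lam ≠ 0 := by
      intro h0
      have hx0 := sq_add_sq_zero hns (hOx.trans h0)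
      have hy0 := sq_add_sq_zero hns (hOy.trans h0)
      apply hxy
      exact Prod.ext ((sub_eq_zero.mp hx0.1).trans (sub_eq_zero.mp hy0.1).symm)
        ((sub_eq_zero.mp hx0.2).trans (sub_eq_zero.mp hy0.2).symm)
    refine ⟨((a1, a2), lam), ⟨hlamne, hOx, hOy, hOz⟩, ?_⟩
    rintro ⟨⟨b1, b2⟩, mu⟩ ⟨hmune, hx', hy', hz'⟩
    unfold OnCircle at hx' hy' hz'
    simp only at hx' hy' hz'
    have hb1 : 2 * A1 * b1 + 2 * A2 * b2 = E1 := by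
      rw [hA1, hA2, hE1]
      linear_combination hx' - hy'
    have hb2 : 2 * B1 * b1 + 2 * B2 * b2 = E2 := by
      rw [hB1, hB2, hE2]
      linear_combination hx' - hz'
    have d1 : (2 * D) * (b1 - a1) = 0 := by
      rw [hD]
      linear_combination B2 * hb1 - A2 * hb2 - B2 * heq1 + A2 * heq2
    have d2 : (2 * D) * (b2 - a2) = 0 := by
      rw [hD]
      linear_combination A1 * hb2 - B1 * hb1 - A1 * heq2 + B1 * heq1
    have hbeq1 : b1 = a1 := sub_eq_zero.mp ((mul_eq_zero.mp d1).resolve_left h2D)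
    have hbeq2 : b2 = a2 := sub_eq_zero.mp ((mul_eq_zero.mp d2).resolve_left h2D)
    have hmu : mu = lam := by rw [hlam, ← hx', hbeq1, hbeq2]
    simp [hbeq1, hbeq2, hmu]
  · rintro hc ⟨⟨a1, a2⟩, lam, hlamne, hx', hy', hz'⟩
    unfold OnCircle at hx' hy' hz'
    simp only at hx' hy' hz'
    rcases hc with ⟨b1, b2, e1, e2, e3⟩ | ⟨μ, e1, e2, e3⟩
    · have hb : (1 : F) + b1 ^ 2 ≠ 0 := by
        intro h
        apply hns
        have hb0 : b1 ≠ 0 := by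
          intro hb0
          rw [hb0] at h
          simp at h
        refine ⟨b1⁻¹, ?_⟩
        field_simp
        linear_combination -h
      have hxy1 : y.1 - x.1 ≠ 0 := by
        intro h
        have h1 : y.1 = x.1 := sub_eq_zero.mp h
        exact hxy (Prod.ext h1.symm (by rw [e1, e2, h1]))
      have hyz1 : y.1 - z.1 ≠ 0 := by
        intro h
        have h1 : y.1 = z.1 := sub_eq_zero.mp h
        exact hyz (Prod.ext h1 (by rw [e2, e3, h1]))
      have hxz1 : z.1 - x.1 ≠ 0 := by
        intro h
        have h1 : z.1 = x.1 := sub_eq_zero.mp h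
        exact hxz (Prod.ext h1.symm (by rw [e1, e3, h1]))
      rw [e1] at hx'
      rw [e2] at hy'
      rw [e3] at hz'
      have k1 : (y.1 - x.1) * ((1 + b1 ^ 2) * (y.1 + x.1) + 2 * b1 * (b2 - a2) - 2 * a1) = 0 := by
        linear_combination hy' - hx'
      have k2 : (z.1 - x.1) * ((1 + b1 ^ 2) * (z.1 + x.1) + 2 * b1 * (b2 - a2) - 2 * a1) = 0 := by
        linear_combination hz' - hx'
      have l1 := (mul_eq_zero.mp k1).resolve_left hxy1
      have l2 := (mul_eq_zero.mp k2).resolve_left hxz1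
      have hfin : (1 + b1 ^ 2) * (y.1 - z.1) = 0 := by linear_combination l1 - l2
      rcases mul_eq_zero.mp hfin with h | h
      · exact hb h
      · exact hyz1 h
    · rw [e1] at hx'
      rw [e2] at hy'
      rw [e3] at hz'
      have hxy2 : y.2 - x.2 ≠ 0 := by
        intro h
        exact hxy (Prod.ext (e1.trans e2.symm) (sub_eq_zero.mp h).symm)
      have hxz2 : z.2 - x.2 ≠ 0 := by
        intro h
        exact hxz (Prod.ext (e1.trans e3.symm) (sub_eq_zero.mp h).symm)
      have hyz2 : y.2 - z.2 ≠ 0 := by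
        intro h
        exact hyz (Prod.ext (e2.trans e3.symm) (sub_eq_zero.mp h))
      have k1 : (y.2 - x.2) * (y.2 + x.2 - 2 * a2) = 0 := by
        linear_combination hy' - hx'
      have k2 : (z.2 - x.2) * (z.2 + x.2 - 2 * a2) = 0 := by
        linear_combination hz' - hx'
      have l1 := (mul_eq_zero.mp k1).resolve_left hxy2
      have l2 := (mul_eq_zero.mp k2).resolve_left hxz2
      exact hyz2 (by linear_combination l1 - l2)
end

section
/- Let q be a prime power with q ≡ 3 (mod 4) and let n = q² + 1. Then there exists a family of q³ + q subsets of an n-element set, each of size q + 1, such that every 3-element subset of the n-element set is contained in exactly one member of the family. Consequently, cp(q² + 1, 3) ≤ q³ + q. -/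
open Polynomial Module Finset
open scoped LinearAlgebra.Projectivization Classical

set_option linter.unusedSectionVars false

noncomputable def Ksub (F : Type*) [Field F] (pp mm : ℕ) [Fact pp.Prime] [CharP F pp] :
    Subfield F where
  carrier := {x | x ^ pp ^ mm = x}
  mul_mem' := by intro a b ha hb; simp only [Set.mem_setOf_eq] at *; rw [mul_pow, ha, hb]
  one_mem' := by simp
  add_mem' := by intro a b ha hb; simp only [Set.mem_setOf_eq] at *; rw [add_pow_char_pow, ha, hb]
  zero_mem' := by
    simp only [Set.mem_setOf_eq]
    exact zero_pow (pow_ne_zero _ (Fact.out (p := pp.Prime)).ne_zero)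
  neg_mem' := by
    intro a ha; simp only [Set.mem_setOf_eq] at *
    have := sub_pow_char_pow (R := F) (p := pp) (n := mm) (x := 0) (y := a)
    rw [ha, zero_pow (pow_ne_zero _ (Fact.out (p := pp.Prime)).ne_zero), zero_sub] at this; simpa using this
  inv_mem' := by intro a ha; simp only [Set.mem_setOf_eq] at *; rw [inv_pow, ha]


theorem card_pow_eq_self (F : Type*) [Field F] [Fintype F] [DecidableEq F]
    (pp mm : ℕ) [Fact pp.Prime] (hm : mm ≠ 0)
    (hF : Fintype.card F = (pp ^ mm) ^ 2) :
    (Finset.univ.filter fun x : F => x ^ pp ^ mm = x).card = pp ^ mm := by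
  set q := pp ^ mm with hq
  have hp1 : 1 < pp := (Fact.out (p := pp.Prime)).one_lt
  have hq2 : 2 ≤ q := by
    calc 2 ≤ pp := hp1
    _ ≤ pp ^ mm := Nat.le_self_pow hm pp
  have hle : (Finset.univ.filter fun x : F => x ^ q = x).card ≤ q := by
    have hne : (X ^ q - X : F[X]) ≠ 0 := by
      have : CharP F (ringChar F) := ringChar.charP F
      exact FiniteField.X_pow_card_pow_sub_X_ne_zero F hm hp1
    calc (Finset.univ.filter fun x : F => x ^ q = x).card
        ≤ ((X ^ q - X : F[X]).roots).toFinset.card := by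
          apply Finset.card_le_card
          intro x hx
          simp only [Finset.mem_filter] at hx
          rw [Multiset.mem_toFinset, mem_roots hne]
          simp [IsRoot, sub_eq_zero, hx.2]
      _ ≤ Multiset.card ((X ^ q - X : F[X]).roots) := Multiset.toFinset_card_le _
      _ ≤ (X ^ q - X : F[X]).natDegree := card_roots' _
      _ = q := by
          have := FiniteField.X_pow_card_pow_sub_X_natDegree_eq (K' := F) hm hp1
          simpa [hq] using this
  have hge : q ≤ (Finset.univ.filter fun x : F => x ^ q = x).card := by
    obtain ⟨g, hg⟩ := IsCyclic.exists_generator (α := Fˣ)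
    have hcard : Fintype.card Fˣ = q ^ 2 - 1 := by rw [Fintype.card_units, hF]
    have horderg : orderOf g = q ^ 2 - 1 := by
      rw [orderOf_eq_card_of_forall_mem_zpowers hg, Nat.card_eq_fintype_card, hcard]
    set h := g ^ (q + 1) with hh
    have hsq : q ^ 2 - 1 = (q + 1) * (q - 1) := by
      have := Nat.sq_sub_sq q 1
      simpa using this
    have hdvd : (q + 1) ∣ (q ^ 2 - 1) := ⟨q - 1, hsq⟩
    have horder : orderOf h = q - 1 := by
      rw [hh, orderOf_pow, horderg, Nat.gcd_eq_right hdvd]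
      rw [hsq, Nat.mul_div_cancel_left _ (Nat.succ_pos q)]
    -- elements of zpowers h, plus 0
    have hmem : ∀ x : Fˣ, x ∈ Subgroup.zpowers h → (x : F) ^ q = x := by
      intro x hx
      obtain ⟨k, rfl⟩ := Subgroup.mem_zpowers_iff.mp hx
      have h1 : h ^ (q - 1) = 1 := by rw [← horder]; exact pow_orderOf_eq_one h
      have h2 : (h ^ k) ^ (q - 1) = 1 := by
        rw [← zpow_natCast, ← zpow_mul, mul_comm, zpow_mul, zpow_natCast, h1, one_zpow]
      have h3 : ((h ^ k : Fˣ) : F) ^ (q - 1) = 1 := by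
        rw [← Units.val_pow_eq_pow_val, h2, Units.val_one]
      calc ((h ^ k : Fˣ) : F) ^ q = ((h ^ k : Fˣ) : F) ^ (q - 1) * ((h ^ k : Fˣ) : F) := by
            rw [← pow_succ]; congr 1; omega
        _ = _ := by rw [h3, one_mul]
    classical
    have hsub : ∀ a : Option (Subgroup.zpowers h), a ∈ (Finset.univ : Finset (Option (Subgroup.zpowers h))) →
        a.elim (0 : F) (fun u => ((u : Fˣ) : F)) ∈ Finset.univ.filter (fun x : F => x ^ q = x) := by
      rintro (_|u) -
      · simp only [Option.elim, Finset.mem_filter, Finset.mem_univ, true_and]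
        exact zero_pow (by omega : q ≠ 0)
      · simp only [Option.elim, Finset.mem_filter, Finset.mem_univ, true_and]
        exact hmem u u.2
    have hinj : Set.InjOn (fun x : Option (Subgroup.zpowers h) =>
        x.elim (0 : F) (fun u => ((u : Fˣ) : F)))
        ↑(Finset.univ : Finset (Option (Subgroup.zpowers h))) := by
      rintro (_|x) - (_|y) - hxy
      · rfl
      · simp only [Option.elim] at hxy
        exact absurd hxy.symm (Units.ne_zero _)
      · simp only [Option.elim] at hxy
        exact absurd hxy (Units.ne_zero _)
      · simp only [Option.elim] at hxy
        exact congrArg some (Subtype.ext (Units.ext hxy))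
    have hcardle := Finset.card_le_card_of_injOn _ hsub hinj
    calc q = Fintype.card (Option (Subgroup.zpowers h)) := by
          have hz : Nat.card (Subgroup.zpowers h) = q - 1 := by rw [Nat.card_zpowers h, horder]
          rw [Fintype.card_option, ← Nat.card_eq_fintype_card, hz]
          omega
      _ ≤ _ := by simpa using hcardle
  omega

section Master

variable {F : Type*} [Field F] [Fintype F] (K : Subfield F)

local notation "V" => F × F
local notation "Pt" => ℙ F (F × F)

instance : Finite Pt := Quotient.finite _
noncomputable instance : Fintype Pt := Fintype.ofFinite _

/-- map a vector to its projective point (junk at 0) -/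
noncomputable def pmap (v : V) : Pt :=
  if h : v ≠ 0 then Projectivization.mk F v h else Classical.arbitrary _

lemma pmap_mk (v : V) (h : v ≠ 0) : pmap v = Projectivization.mk F v h := dif_pos h

/-- the circle (Baer subline) attached to a K-subspace W of V -/
noncomputable def circ (W : Submodule K V) : Finset Pt :=
  (Finset.univ.filter fun v : V => v ∈ W ∧ v ≠ 0).image pmap

lemma mem_circ {W : Submodule K V} {x : Pt} :
    x ∈ circ K W ↔ ∃ v, ∃ h : v ≠ 0, v ∈ W ∧ Projectivization.mk F v h = x := by
  simp only [circ, Finset.mem_image, Finset.mem_filter, Finset.mem_univ, true_and]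
  constructor
  · rintro ⟨v, ⟨hvW, hv0⟩, rfl⟩
    exact ⟨v, hv0, hvW, (pmap_mk v hv0).symm⟩
  · rintro ⟨v, hv0, hvW, rfl⟩
    exact ⟨v, ⟨hvW, hv0⟩, pmap_mk v hv0⟩

end Master

section Count

variable {F : Type*} [Field F] [Fintype F] (K : Subfield F)

/-- fibers of pmap over the whole space -/
lemma fiber_card_total (v₀ : F × F) (h0 : v₀ ≠ 0) :
    (Finset.univ.filter fun v : F × F => v ≠ 0 ∧ pmap v = pmap v₀).card
      = Fintype.card F - 1 := by
  have himg : (Finset.univ.filter fun v : F × F => v ≠ 0 ∧ pmap v = pmap v₀)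
      = Finset.univ.image (fun a : Fˣ => (a : F) • v₀) := by
    ext v
    simp only [Finset.mem_filter, Finset.mem_univ, true_and, Finset.mem_image]
    constructor
    · rintro ⟨hv0, hveq⟩
      rw [pmap_mk v hv0, pmap_mk v₀ h0, Projectivization.mk_eq_mk_iff] at hveq
      obtain ⟨a, ha⟩ := hveq
      exact ⟨a, ha⟩
    · rintro ⟨a, rfl⟩
      have hv0 : (a : F) • v₀ ≠ 0 := smul_ne_zero (Units.ne_zero a) h0
      refine ⟨hv0, ?_⟩
      rw [pmap_mk _ hv0, pmap_mk v₀ h0, Projectivization.mk_eq_mk_iff]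
      exact ⟨a, rfl⟩
  rw [himg, Finset.card_image_of_injective _ ?_, Finset.card_univ, Fintype.card_units]
  intro a b hab
  exact Units.ext (smul_left_injective F h0 hab)

lemma card_Pt : Fintype.card (ℙ F (F × F)) * (Fintype.card F - 1)
    = Fintype.card F ^ 2 - 1 := by
  have hsum := Finset.card_eq_sum_card_fiberwise
    (s := Finset.univ.filter fun v : F × F => v ≠ 0)
    (t := (Finset.univ : Finset (ℙ F (F × F)))) (f := pmap)
    (fun v _ => Finset.mem_univ _)
  have hcards : (Finset.univ.filter fun v : F × F => v ≠ 0).card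
      = Fintype.card F ^ 2 - 1 := by
    rw [Finset.filter_ne', Finset.card_erase_of_mem (Finset.mem_univ _), Finset.card_univ]
    simp [Fintype.card_prod, sq]
  rw [hcards] at hsum
  rw [hsum, Finset.sum_congr rfl (fun x _ => ?_), Finset.sum_const, Finset.card_univ,
    smul_eq_mul]
  have hrep : pmap x.rep = x := by rw [pmap_mk _ x.rep_nonzero, Projectivization.mk_rep]
  have : (Finset.univ.filter fun v : F × F => v ≠ 0).filter (fun v => pmap v = x)
      = Finset.univ.filter fun v : F × F => v ≠ 0 ∧ pmap v = pmap x.rep := by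
    rw [Finset.filter_filter]; simp_rw [hrep]
  rw [this, fiber_card_total _ x.rep_nonzero]

end Count

section Count2

variable {F : Type*} [Field F] [Fintype F] {K : Subfield F}

lemma card_submodule (L : Submodule K (F × F)) :
    (Finset.univ.filter fun v : F × F => v ∈ L).card
      = Fintype.card K ^ (finrank K L) := by
  rw [← Fintype.card_subtype]
  exact card_eq_pow_finrank (K := K) (V := L)

lemma indep_not_in_line {u w v₀ : F × F} (hind : LinearIndependent F ![u, w])
    (hu : ∃ a : F, u = a • v₀) (hw : ∃ b : F, w = b • v₀) : False := by
  obtain ⟨a, rfl⟩ := hu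
  obtain ⟨b, rfl⟩ := hw
  rw [linearIndependent_fin2] at hind
  have hb : b ≠ 0 := by
    rintro rfl
    exact hind.1 (by simp)
  exact hind.2 (a / b) (by
    simp only [Matrix.cons_val_one, Matrix.head_cons, Matrix.cons_val_zero, smul_smul,
      div_mul_cancel₀ _ hb])

lemma fiber_card_sub (W : Submodule K (F × F)) (hW2 : finrank K W = 2)
    (hWind : ∃ u w, u ∈ W ∧ w ∈ W ∧ LinearIndependent F ![u, w])
    (v₀ : F × F) (hv₀W : v₀ ∈ W) (h0 : v₀ ≠ 0) :
    (Finset.univ.filter fun v : F × F => (v ∈ W ∧ v ≠ 0) ∧ pmap v = pmap v₀).card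
      = Fintype.card K - 1 := by
  set L : Submodule K (F × F) := (Submodule.restrictScalars K (F ∙ v₀)) ⊓ W with hL
  have hv₀L : v₀ ∈ L := by
    refine ⟨?_, hv₀W⟩
    exact Submodule.mem_span_singleton_self v₀
  have hfib : (Finset.univ.filter fun v : F × F => (v ∈ W ∧ v ≠ 0) ∧ pmap v = pmap v₀)
      = (Finset.univ.filter fun v : F × F => v ∈ L).erase 0 := by
    ext v
    simp only [Finset.mem_filter, Finset.mem_univ, true_and, Finset.mem_erase]
    constructor
    · rintro ⟨⟨hvW, hv0⟩, hveq⟩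
      rw [pmap_mk v hv0, pmap_mk v₀ h0, Projectivization.mk_eq_mk_iff'] at hveq
      obtain ⟨a, ha⟩ := hveq
      exact ⟨hv0, ⟨Submodule.mem_span_singleton.mpr ⟨a, ha⟩, hvW⟩⟩
    · rintro ⟨hv0, hvL, hvW⟩
      obtain ⟨a, ha⟩ := Submodule.mem_span_singleton.mp hvL
      refine ⟨⟨hvW, hv0⟩, ?_⟩
      rw [pmap_mk v hv0, pmap_mk v₀ h0, Projectivization.mk_eq_mk_iff']
      exact ⟨a, ha⟩
  have hrank : finrank K L = 1 := by
    have hle : L ≤ W := inf_le_right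
    have h1 : 1 ≤ finrank K L := by
      rw [Nat.one_le_iff_ne_zero]
      intro hzero
      have : L = ⊥ := Submodule.finrank_eq_zero.mp hzero
      rw [this] at hv₀L
      exact h0 (by simpa using hv₀L)
    have h2 : finrank K L ≤ 2 := hW2 ▸ Submodule.finrank_mono hle
    have hne : finrank K L ≠ 2 := by
      intro heq
      have : L = W := Submodule.eq_of_le_of_finrank_le hle (by rw [heq, hW2])
      obtain ⟨u, w, huW, hwW, hind⟩ := hWind
      rw [← this] at huW hwW
      refine indep_not_in_line (v₀ := v₀) hind ?_ ?_
      · obtain ⟨a, ha⟩ := Submodule.mem_span_singleton.mp huW.1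
        exact ⟨a, ha.symm⟩
      · obtain ⟨b, hb⟩ := Submodule.mem_span_singleton.mp hwW.1
        exact ⟨b, hb.symm⟩
    omega
  rw [hfib, Finset.card_erase_of_mem, card_submodule, hrank, pow_one]
  · simp only [Finset.mem_filter, Finset.mem_univ, true_and]
    exact L.zero_mem

lemma circ_card (W : Submodule K (F × F)) (hW2 : finrank K W = 2)
    (hWind : ∃ u w, u ∈ W ∧ w ∈ W ∧ LinearIndependent F ![u, w]) :
    (circ K W).card * (Fintype.card K - 1) = Fintype.card K ^ 2 - 1 := by
  have hsum := Finset.card_eq_sum_card_fiberwise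
    (s := Finset.univ.filter fun v : F × F => v ∈ W ∧ v ≠ 0)
    (t := circ K W) (f := pmap)
    (fun v hv => by
      simp only [Finset.mem_coe, Finset.mem_filter, Finset.mem_univ, true_and] at hv
      exact Finset.mem_image_of_mem pmap (by
        simp only [Finset.mem_filter, Finset.mem_univ, true_and]; exact hv))
  have hcards : (Finset.univ.filter fun v : F × F => v ∈ W ∧ v ≠ 0).card
      = Fintype.card K ^ 2 - 1 := by
    have : (Finset.univ.filter fun v : F × F => v ∈ W ∧ v ≠ 0)
        = (Finset.univ.filter fun v : F × F => v ∈ W).erase 0 := by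
      ext v
      simp only [Finset.mem_filter, Finset.mem_univ, true_and, Finset.mem_erase]
      tauto
    rw [this, Finset.card_erase_of_mem (by simp [W.zero_mem]), card_submodule, hW2]
  rw [hcards] at hsum
  have hfib : ∀ x ∈ circ K W,
      ((Finset.univ.filter fun v : F × F => v ∈ W ∧ v ≠ 0).filter (fun v => pmap v = x)).card
        = Fintype.card K - 1 := by
    intro x hx
    obtain ⟨v₀, h0, hv₀W, hmk⟩ := (mem_circ K).mp hx
    have hrep : pmap v₀ = x := by rw [pmap_mk _ h0, hmk]
    have heq : (Finset.univ.filter fun v : F × F => v ∈ W ∧ v ≠ 0).filter (fun v => pmap v = x)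
        = Finset.univ.filter fun v : F × F => (v ∈ W ∧ v ≠ 0) ∧ pmap v = pmap v₀ := by
      rw [Finset.filter_filter]; simp_rw [hrep]
    rw [heq, fiber_card_sub W hW2 hWind v₀ hv₀W h0]
  rw [mul_comm, hsum, Finset.sum_congr rfl hfib, Finset.sum_const, smul_eq_mul]
  exact Nat.mul_comm _ _

end Count2

section Helpers

variable {F : Type*} [Field F] [Fintype F] {K : Subfield F}

lemma indep_of_mk_ne {u w : F × F} (hu : u ≠ 0) (hw : w ≠ 0)
    (h : Projectivization.mk F u hu ≠ Projectivization.mk F w hw) :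
    LinearIndependent F ![u, w] := by
  rw [linearIndependent_fin2]
  refine ⟨by simpa using hw, fun a ha => ?_⟩
  simp only [Matrix.cons_val_one, Matrix.head_cons, Matrix.cons_val_zero] at ha
  exact h ((Projectivization.mk_eq_mk_iff' F u w hu hw).mpr ⟨a, ha⟩)

lemma indep_smul {u w : F × F} {a b : F} (ha : a ≠ 0) (hb : b ≠ 0)
    (hind : LinearIndependent F ![u, w]) : LinearIndependent F ![a • u, b • w] := by
  rw [linearIndependent_fin2] at hind ⊢
  simp only [Matrix.cons_val_one, Matrix.head_cons, Matrix.cons_val_zero] at hind ⊢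
  refine ⟨smul_ne_zero hb hind.1, fun c hc => ?_⟩
  apply hind.2 (c * b / a)
  have : (c * b / a) • w = a⁻¹ • (c • b • w) := by
    rw [smul_smul, smul_smul]
    congr 1
    field_simp
  rw [this, hc, smul_smul, inv_mul_cancel₀ ha, one_smul]

lemma indep_coeff {u w : F × F} (hind : LinearIndependent F ![u, w])
    {a b c d : F} (h : a • u + b • w = c • u + d • w) : a = c ∧ b = d := by
  have h0 : (a - c) • u + (b - d) • w = 0 := by
    rw [sub_smul, sub_smul, sub_add_sub_comm, h, sub_self]
  have := linearIndependent_iff'.mp hind Finset.univ ![a - c, b - d] (by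
    rw [Fin.sum_univ_two]
    simpa using h0)
  have h1 := this 0 (Finset.mem_univ _)
  have h2 := this 1 (Finset.mem_univ _)
  simp only [Matrix.cons_val_zero, Matrix.cons_val_one, Matrix.head_cons] at h1 h2
  constructor <;> [skip; skip] <;> [exact sub_eq_zero.mp h1; exact sub_eq_zero.mp h2]

lemma span_pair_smul_right (k : K) (hk : k ≠ 0) (x y : F × F) :
    Submodule.span K {x, k • y} = Submodule.span K {x, y} := by
  apply Submodule.span_eq_span
  · rintro z (rfl | rfl)
    · exact Submodule.subset_span (Set.mem_insert _ _)
    · exact Submodule.smul_mem _ k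
        (Submodule.subset_span (Set.mem_insert_of_mem _ rfl))
  · rintro z (rfl | rfl)
    · exact Submodule.subset_span (Set.mem_insert _ _)
    · have hz : (k • z) ∈ ({x, k • z} : Set (F × F)) := Set.mem_insert_of_mem _ rfl
      have hmem := Submodule.smul_mem (Submodule.span K {x, k • z}) k⁻¹
        (Submodule.subset_span hz)
      rwa [smul_smul, inv_mul_cancel₀ hk, one_smul] at hmem

lemma coeK_injective : Function.Injective fun r : K => r • (1 : F) := by
  intro a b h
  simp only [Subfield.smul_def, smul_eq_mul, mul_one] at h
  exact_mod_cast h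

lemma W_eq_span {W : Submodule K (F × F)} (hW2 : finrank K W = 2)
    {x y : F × F} (hx : x ∈ W) (hy : y ∈ W) (hind : LinearIndependent F ![x, y]) :
    W = Submodule.span K {x, y} := by
  have hindK : LinearIndependent K ![x, y] := hind.restrict_scalars coeK_injective
  have hle : Submodule.span K {x, y} ≤ W := by
    rw [Submodule.span_le]
    rintro z (rfl | rfl) <;> assumption
  have hrange : Set.range ![x, y] = {x, y} := by
    simp only [Matrix.range_cons, Matrix.range_empty, Set.union_empty, Set.union_singleton]
    exact Set.pair_comm y x
  have hfr : finrank K (Submodule.span K ({x, y} : Set (F × F))) = 2 := by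
    have := finrank_span_eq_card hindK
    rw [hrange] at this
    simpa using this
  exact (Submodule.eq_of_le_of_finrank_le hle (by rw [hW2, hfr])).symm

lemma circ_span_smul {d : F} (hd : d ≠ 0) (x y : F × F) :
    circ K (Submodule.span K {d • x, d • y}) = circ K (Submodule.span K {x, y}) := by
  have hmap : Submodule.span K ({d • x, d • y} : Set (F × F))
      = (Submodule.span K ({x, y} : Set (F × F))).map
          ((LinearMap.lsmul F (F × F) d).restrictScalars K) := by
    rw [Submodule.map_span]
    congr 1
    rw [Set.image_pair]
    rfl
  rw [hmap]
  ext z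
  rw [mem_circ, mem_circ]
  constructor
  · rintro ⟨v, hv0, hvW, rfl⟩
    obtain ⟨w, hwW, rfl⟩ := Submodule.mem_map.mp hvW
    have hw0 : w ≠ 0 := by
      rintro rfl; simp at hv0
    refine ⟨w, hw0, hwW, ?_⟩
    apply (Projectivization.mk_eq_mk_iff' F _ _ hw0 hv0).mpr
    exact ⟨d⁻¹, by simp [LinearMap.lsmul_apply, smul_smul, inv_mul_cancel₀ hd]⟩
  · rintro ⟨w, hw0, hwW, rfl⟩
    have hdw0 : d • w ≠ 0 := smul_ne_zero hd hw0
    refine ⟨d • w, hdw0, Submodule.mem_map.mpr ⟨w, hwW, rfl⟩, ?_⟩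
    exact (Projectivization.mk_eq_mk_iff' F _ _ hdw0 hw0).mpr ⟨d, rfl⟩

end Helpers

section DoubleCount

lemma double_count {N k : ℕ} (P : Finset (Finset (Fin N)))
    (hsize : ∀ A ∈ P, A.card = k)
    (hcover : ∀ S : Finset (Fin N), S.card = 3 → ∃! A, A ∈ P ∧ S ⊆ A) :
    N.choose 3 = P.card * k.choose 3 := by
  classical
  set g : Finset (Fin N) → Finset (Fin N) :=
    fun S => if h : S.card = 3 then (hcover S h).exists.choose else ∅ with hg
  have hgspec : ∀ S : Finset (Fin N), S.card = 3 → g S ∈ P ∧ S ⊆ g S := by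
    intro S hS
    rw [hg]; simp only [dif_pos hS]
    exact (hcover S hS).exists.choose_spec
  have hguniq : ∀ S : Finset (Fin N), S.card = 3 → ∀ A ∈ P, S ⊆ A → g S = A := by
    intro S hS A hA hSA
    obtain ⟨B, hB, hBu⟩ := hcover S hS
    rw [hBu _ ⟨(hgspec S hS).1, (hgspec S hS).2⟩, hBu _ ⟨hA, hSA⟩]
  have hsum := Finset.card_eq_sum_card_fiberwise
    (s := (Finset.univ : Finset (Fin N)).powersetCard 3) (t := P) (f := g)
    (fun S hS => by
      rw [Finset.mem_coe, Finset.mem_powersetCard] at hS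
      exact (hgspec S hS.2).1)
  rw [Finset.card_powersetCard, Finset.card_univ, Fintype.card_fin] at hsum
  have hfib : ∀ A ∈ P,
      (((Finset.univ : Finset (Fin N)).powersetCard 3).filter (fun S => g S = A)).card
        = k.choose 3 := by
    intro A hA
    have heq : ((Finset.univ : Finset (Fin N)).powersetCard 3).filter (fun S => g S = A)
        = A.powersetCard 3 := by
      ext S
      simp only [Finset.mem_filter, Finset.mem_powersetCard, Finset.subset_univ, true_and]
      constructor
      · rintro ⟨hS3, rfl⟩
        exact ⟨(hgspec S hS3).2, hS3⟩
      · rintro ⟨hSA, hS3⟩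
        exact ⟨hS3, hguniq S hS3 A hA hSA⟩
    rw [heq, Finset.card_powersetCard, hsize A hA]
  rw [hsum, Finset.sum_congr rfl hfib, Finset.sum_const, smul_eq_mul]

lemma choose_identity (q : ℕ) (hq : 2 ≤ q) :
    (q ^ 2 + 1).choose 3 = (q ^ 3 + q) * (q + 1).choose 3 := by
  obtain ⟨k, rfl⟩ : ∃ k, q = k + 1 := ⟨q - 1, by omega⟩
  have h1 := Nat.descFactorial_eq_factorial_mul_choose ((k + 1) ^ 2 + 1) 3
  have h2 := Nat.descFactorial_eq_factorial_mul_choose ((k + 1) + 1) 3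
  have hdesc : ((k + 1) ^ 2 + 1).descFactorial 3
      = ((k + 1) ^ 3 + (k + 1)) * (((k + 1) + 1).descFactorial 3) := by
    simp only [Nat.descFactorial_succ, Nat.descFactorial_zero]
    have e1 : (k + 1) ^ 2 + 1 - 1 = k ^ 2 + 2 * k + 1 := by ring_nf; omega
    have e2 : (k + 1) ^ 2 + 1 - 2 = k ^ 2 + 2 * k := by ring_nf; omega
    have e3 : k + 1 + 1 - 1 = k + 1 := by omega
    have e4 : k + 1 + 1 - 2 = k := by omega
    rw [e1, e2, e3, e4]
    simp only [Nat.sub_zero]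
    ring
  have h61 : Nat.factorial 3 * ((k + 1) ^ 2 + 1).choose 3
      = Nat.factorial 3 * (((k + 1) ^ 3 + (k + 1)) * (((k + 1) + 1).choose 3)) := by
    rw [← h1, hdesc, h2]; ring
  exact Nat.eq_of_mul_eq_mul_left (Nat.factorial_pos 3) h61

end DoubleCount

section Helpers2
variable {F : Type*} [Field F] [Fintype F] {K : Subfield F}

lemma span_pair_rank {u w : F × F} (hind : LinearIndependent F ![u, w]) :
    finrank K (Submodule.span K ({u, w} : Set (F × F))) = 2 := by
  have hindK : LinearIndependent K ![u, w] := hind.restrict_scalars coeK_injective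
  have hrange : Set.range ![u, w] = {u, w} := by
    simp only [Matrix.range_cons, Matrix.range_empty, Set.union_empty, Set.union_singleton]
    exact Set.pair_comm w u
  have := finrank_span_eq_card hindK
  rw [hrange] at this
  simpa using this

end Helpers2

theorem master {F : Type*} [Field F] [Fintype F] (K : Subfield F) (q : ℕ)
    (hq : 2 ≤ q) (hKq : Fintype.card K = q) (hFq : Fintype.card F = q ^ 2) :
    ∃ P : Finset (Finset (Fin (q ^ 2 + 1))),
      P.card = q ^ 3 + q ∧ (∀ A ∈ P, A.card = q + 1) ∧
      ∀ S : Finset (Fin (q ^ 2 + 1)), S.card = 3 → ∃! A, A ∈ P ∧ S ⊆ A := by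
  classical
  have hPt : Fintype.card (ℙ F (F × F)) = q ^ 2 + 1 := by
    have h := card_Pt (F := F)
    rw [hFq] at h
    have hfac : (q ^ 2) ^ 2 - 1 = (q ^ 2 + 1) * (q ^ 2 - 1) := by
      have := Nat.sq_sub_sq (q ^ 2) 1
      simpa using this
    rw [hfac] at h
    have hpos : 0 < q ^ 2 - 1 := by
      have h4 : 2 * 2 ≤ q * q := Nat.mul_le_mul hq hq
      have hsq : q ^ 2 = q * q := sq q
      omega
    exact Nat.eq_of_mul_eq_mul_right hpos h
  set e : Fin (q ^ 2 + 1) ≃ ℙ F (F × F) := (Fintype.equivFinOfCardEq hPt).symm with he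
  set cF : Submodule K (F × F) → Finset (Fin (q ^ 2 + 1)) :=
    fun W => (circ K W).map e.symm.toEmbedding with hcF
  have hmemcF : ∀ (W : Submodule K (F × F)) (t : Fin (q ^ 2 + 1)),
      t ∈ cF W ↔ e t ∈ circ K W := by
    intro W t
    rw [hcF]
    simp [Finset.mem_map_equiv]
  have hcirc_card : ∀ W : Submodule K (F × F), finrank K W = 2 →
      (∃ u w, u ∈ W ∧ w ∈ W ∧ LinearIndependent F ![u, w]) → (cF W).card = q + 1 := by
    intro W h2 hind
    have h := circ_card W h2 hind
    rw [hKq] at h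
    have hfac : q ^ 2 - 1 = (q + 1) * (q - 1) := by simpa using Nat.sq_sub_sq q 1
    rw [hfac] at h
    have hcc := Nat.eq_of_mul_eq_mul_right (by omega : 0 < q - 1) h
    rw [hcF]
    rw [Finset.card_map, hcc]
  set P : Finset (Finset (Fin (q ^ 2 + 1))) :=
    ((Finset.univ : Finset ((F × F) × (F × F))).filter
      (fun uv => LinearIndependent F ![uv.1, uv.2])).image
      (fun uv => cF (Submodule.span K {uv.1, uv.2})) with hP
  have hmemP : ∀ A, A ∈ P ↔ ∃ u w : F × F, LinearIndependent F ![u, w] ∧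
      A = cF (Submodule.span K {u, w}) := by
    intro A
    rw [hP]
    simp only [Finset.mem_image, Finset.mem_filter, Finset.mem_univ, true_and]
    constructor
    · rintro ⟨⟨u, w⟩, hind, rfl⟩
      exact ⟨u, w, hind, rfl⟩
    · rintro ⟨u, w, hind, rfl⟩
      exact ⟨⟨u, w⟩, hind, rfl⟩
  have hsizes : ∀ A ∈ P, A.card = q + 1 := by
    intro A hA
    obtain ⟨u, w, hind, rfl⟩ := (hmemP A).mp hA
    exact hcirc_card _ (span_pair_rank hind)
      ⟨u, w, Submodule.subset_span (Set.mem_insert _ _),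
        Submodule.subset_span (Set.mem_insert_of_mem _ rfl), hind⟩
  have hfr2 : finrank F (F × F) = 2 := by
    simp [Module.finrank_prod, Module.finrank_self]
  have hcover : ∀ S : Finset (Fin (q ^ 2 + 1)), S.card = 3 → ∃! A, A ∈ P ∧ S ⊆ A := by
    intro S hS3
    obtain ⟨a, b, c, hab, hac, hbc, rfl⟩ := Finset.card_eq_three.mp hS3
    set p₁ := e a with hp₁
    set p₂ := e b with hp₂
    set p₃ := e c with hp₃
    have hp12 : p₁ ≠ p₂ := fun h => hab (e.injective h)
    have hp13 : p₁ ≠ p₃ := fun h => hac (e.injective h)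
    have hp23 : p₂ ≠ p₃ := fun h => hbc (e.injective h)
    set u₁ := p₁.rep with hu₁
    set u₂ := p₂.rep with hu₂
    set u₃ := p₃.rep with hu₃def
    have hu₁0 : u₁ ≠ 0 := p₁.rep_nonzero
    have hu₂0 : u₂ ≠ 0 := p₂.rep_nonzero
    have hu₃0 : u₃ ≠ 0 := p₃.rep_nonzero
    have hmk₁ : Projectivization.mk F u₁ hu₁0 = p₁ := p₁.mk_rep
    have hmk₂ : Projectivization.mk F u₂ hu₂0 = p₂ := p₂.mk_rep
    have hmk₃ : Projectivization.mk F u₃ hu₃0 = p₃ := p₃.mk_rep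
    have h12 : LinearIndependent F ![u₁, u₂] :=
      indep_of_mk_ne hu₁0 hu₂0 (by rw [hmk₁, hmk₂]; exact hp12)
    -- basis expansion of u₃
    have hcard2 : Fintype.card (Fin 2) = finrank F (F × F) := by simp [hfr2]
    set B := basisOfLinearIndependentOfCardEqFinrank h12 hcard2 with hBdef
    have hB : ⇑B = ![u₁, u₂] := coe_basisOfLinearIndependentOfCardEqFinrank _ _
    set α := B.repr u₃ 0 with hα_def
    set β := B.repr u₃ 1 with hβ_def
    have hu₃ : α • u₁ + β • u₂ = u₃ := by
      have hs := B.sum_repr u₃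
      rw [Fin.sum_univ_two, hB] at hs
      simpa using hs
    have hα : α ≠ 0 := by
      rintro h0
      have hβ0 : β ≠ 0 := by
        rintro h0b
        apply hu₃0
        rw [← hu₃, h0, h0b, zero_smul, zero_smul, add_zero]
      apply hp23
      rw [← hmk₂, ← hmk₃]
      exact (Projectivization.mk_eq_mk_iff' F u₂ u₃ hu₂0 hu₃0).mpr
        ⟨β⁻¹, by rw [← hu₃, h0, zero_smul, zero_add, smul_smul, inv_mul_cancel₀ hβ0,
          one_smul]⟩
    have hβ : β ≠ 0 := by
      rintro h0
      apply hp13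
      rw [← hmk₁, ← hmk₃]
      exact (Projectivization.mk_eq_mk_iff' F u₁ u₃ hu₁0 hu₃0).mpr
        ⟨α⁻¹, by rw [← hu₃, h0, zero_smul, add_zero, smul_smul, inv_mul_cancel₀ hα,
          one_smul]⟩
    set W₀ : Submodule K (F × F) := Submodule.span K {α • u₁, β • u₂} with hW₀
    have hind₀ : LinearIndependent F ![α • u₁, β • u₂] := indep_smul hα hβ h12
    have hA₀P : cF W₀ ∈ P := (hmemP _).mpr ⟨α • u₁, β • u₂, hind₀, rfl⟩
    have hxmem : (α • u₁) ∈ W₀ := Submodule.subset_span (Set.mem_insert _ _)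
    have hymem : (β • u₂) ∈ W₀ := Submodule.subset_span (Set.mem_insert_of_mem _ rfl)
    have hmem₁ : p₁ ∈ circ K W₀ := by
      rw [mem_circ]
      refine ⟨α • u₁, smul_ne_zero hα hu₁0, hxmem, ?_⟩
      rw [← hmk₁]
      exact (Projectivization.mk_eq_mk_iff' F _ _ _ hu₁0).mpr ⟨α, rfl⟩
    have hmem₂ : p₂ ∈ circ K W₀ := by
      rw [mem_circ]
      refine ⟨β • u₂, smul_ne_zero hβ hu₂0, hymem, ?_⟩
      rw [← hmk₂]
      exact (Projectivization.mk_eq_mk_iff' F _ _ _ hu₂0).mpr ⟨β, rfl⟩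
    have hmem₃ : p₃ ∈ circ K W₀ := by
      rw [mem_circ]
      refine ⟨u₃, hu₃0, ?_, hmk₃⟩
      rw [← hu₃]
      exact Submodule.add_mem _ hxmem hymem
    have hsub : ({a, b, c} : Finset (Fin (q ^ 2 + 1))) ⊆ cF W₀ := by
      intro t ht
      simp only [Finset.mem_insert, Finset.mem_singleton] at ht
      rcases ht with rfl | rfl | rfl
      · exact (hmemcF W₀ t).mpr hmem₁
      · exact (hmemcF W₀ t).mpr hmem₂
      · exact (hmemcF W₀ t).mpr hmem₃
    refine ⟨cF W₀, ⟨hA₀P, hsub⟩, ?_⟩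
    rintro A' ⟨hA'P, hS'⟩
    obtain ⟨x, y, hxy, rfl⟩ := (hmemP A').mp hA'P
    set W' : Submodule K (F × F) := Submodule.span K {x, y} with hW'
    have hW'rank : finrank K W' = 2 := span_pair_rank hxy
    -- representatives of the three points inside W'
    have hget : ∀ t : Fin (q ^ 2 + 1), t ∈ cF W' →
        ∀ (u : F × F) (hu : u ≠ 0), Projectivization.mk F u hu = e t →
        ∃ d : F, d ≠ 0 ∧ d • u ∈ W' := by
      intro t ht u hu hmk
      obtain ⟨v, hv0, hvW, hvmk⟩ := (mem_circ K).mp ((hmemcF W' t).mp ht)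
      have : Projectivization.mk F v hv0 = Projectivization.mk F u hu := by
        rw [hvmk, ← hmk]
      obtain ⟨d, hd⟩ := (Projectivization.mk_eq_mk_iff' F v u hv0 hu).mp this
      refine ⟨d, ?_, hd ▸ hvW⟩
      rintro rfl
      rw [zero_smul] at hd
      exact hv0 hd.symm
    obtain ⟨a₁, ha₁0, ha₁W⟩ := hget a (hS' (by simp)) u₁ hu₁0 (by rw [hmk₁])
    obtain ⟨a₂, ha₂0, ha₂W⟩ := hget b (hS' (by simp)) u₂ hu₂0 (by rw [hmk₂])
    obtain ⟨a₃, ha₃0, ha₃W⟩ := hget c (hS' (by simp)) u₃ hu₃0 (by rw [hmk₃])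
    have hindw : LinearIndependent F ![a₁ • u₁, a₂ • u₂] := indep_smul ha₁0 ha₂0 h12
    have hW'span : W' = Submodule.span K {a₁ • u₁, a₂ • u₂} :=
      W_eq_span hW'rank ha₁W ha₂W hindw
    have ha₃W' : a₃ • u₃ ∈ Submodule.span K ({a₁ • u₁, a₂ • u₂} : Set (F × F)) := by
      rw [← hW'span]; exact ha₃W
    obtain ⟨lam, mu, hlm⟩ := Submodule.mem_span_pair.mp ha₃W'
    have hconv : ((lam : F) * a₁) • u₁ + ((mu : F) * a₂) • u₂ = (a₃ * α) • u₁ + (a₃ * β) • u₂ := by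
      have h1 : ((lam : F)) • (a₁ • u₁) + ((mu : F)) • (a₂ • u₂) = a₃ • u₃ := hlm
      rw [smul_smul, smul_smul] at h1
      rw [h1, ← hu₃, smul_add, smul_smul, smul_smul]
    obtain ⟨hlc, hmc⟩ := indep_coeff h12 hconv
    have hlam0 : (lam : F) ≠ 0 := by
      intro h0
      rw [h0, zero_mul] at hlc
      exact (mul_ne_zero ha₃0 hα) hlc.symm
    have hmu0 : (mu : F) ≠ 0 := by
      intro h0
      rw [h0, zero_mul] at hmc
      exact (mul_ne_zero ha₃0 hβ) hmc.symm
    have hlamK : lam ≠ 0 := fun h => hlam0 (by rw [h]; rfl)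
    have hmuK : mu ≠ 0 := fun h => hmu0 (by rw [h]; rfl)
    set d : F := a₃ / (lam : F) with hd_def
    have hd0 : d ≠ 0 := div_ne_zero ha₃0 hlam0
    set κ : K := lam / mu with hκ_def
    have hκ0 : κ ≠ 0 := div_ne_zero hlamK hmuK
    have hκcoe : (κ : F) = (lam : F) / (mu : F) := by
      rw [hκ_def]; push_cast; ring
    have e1 : a₁ • u₁ = d • (α • u₁) := by
      rw [smul_smul]
      congr 1
      rw [hd_def, div_mul_eq_mul_div, eq_div_iff hlam0]
      linear_combination hlc
    have e2 : a₂ • u₂ = d • (κ • (β • u₂)) := by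
      have hκ1 : κ • (β • u₂) = ((κ : F)) • (β • u₂) := rfl
      have hκsmul : κ • (β • u₂) = ((κ : F) * β) • u₂ := by
        rw [hκ1, smul_smul]
      rw [hκsmul, smul_smul]
      congr 1
      rw [hd_def, hκcoe]
      rw [div_mul_eq_mul_div, eq_div_iff hlam0]
      field_simp
      linear_combination hmc
    have hcirc_eq : circ K W' = circ K W₀ := by
      rw [hW'span, e1, e2, circ_span_smul hd0, span_pair_smul_right κ hκ0]
    exact congrArg (fun s : Finset (ℙ F (F × F)) => s.map e.symm.toEmbedding) hcirc_eq
  have hdc := double_count P hsizes hcover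
  rw [choose_identity q hq] at hdc
  have hchoosepos : 0 < (q + 1).choose 3 := Nat.choose_pos (by omega)
  exact ⟨P, (Nat.eq_of_mul_eq_mul_right hchoosepos hdc).symm, hsizes, hcover⟩

/-- for a prime power `q ≡ 3 (mod 4)` and `n = q² + 1`, there is a
family of `q³ + q` subsets of an `n`-element set, each of size `q + 1`, covering
every `3`-subset exactly once; consequently `cp(q² + 1, 3) ≤ q³ + q`. -/
theorem inversive_plane_exists (q : ℕ) (hq : IsPrimePow q) (hq4 : q % 4 = 3) :
    (∃ P : Finset (Finset (Fin (q ^ 2 + 1))),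
      P.card = q ^ 3 + q ∧ (∀ A ∈ P, A.card = q + 1) ∧
      ∀ S : Finset (Fin (q ^ 2 + 1)), S.card = 3 → ∃! A, A ∈ P ∧ S ⊆ A) ∧
    cp (q ^ 2 + 1) 3 ≤ q ^ 3 + q := by
  classical
  obtain ⟨p, n, hp, hn, rfl⟩ := hq
  haveI : Fact p.Prime := ⟨Nat.prime_iff.mpr hp⟩
  have hp2 : 2 ≤ p := (Nat.prime_iff.mpr hp).two_le
  have hq2 : 2 ≤ p ^ n := le_trans hp2 (Nat.le_self_pow (by omega) p)
  set F := GaloisField p (2 * n) with hF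
  haveI : Fintype F := Fintype.ofFinite F
  have hFcard : Fintype.card F = (p ^ n) ^ 2 := by
    have := GaloisField.card p (2 * n) (by omega)
    rw [← Nat.card_eq_fintype_card, this, ← pow_mul, mul_comm]
  set K : Subfield F := Ksub F p n with hK
  have hKcard : Fintype.card K = p ^ n := by
    have hfilter := card_pow_eq_self F p n (by omega) hFcard
    rw [← hfilter]
    exact Fintype.card_of_subtype _ (fun x => by
      simp only [Finset.mem_filter, Finset.mem_univ, true_and]
      rfl)
  obtain ⟨P, hPcard, hPsize, hPcover⟩ := master K (p ^ n) hq2 hKcard hFcard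
  refine ⟨⟨P, hPcard, hPsize, hPcover⟩, ?_⟩
  apply Nat.sInf_le
  refine ⟨P, ⟨?_, hPcover⟩, hPcard⟩
  intro A hA h
  have h1 := hPsize A hA
  rw [h, Finset.card_univ, Fintype.card_fin] at h1
  have : p ^ n < (p ^ n) ^ 2 := by nlinarith
  omega
end

section
/- Let r ≥ 3 be an integer, let n > r + 1 be an integer, and define the positive real number q by n = q² + q + r - 1. If P is a clique partition of the r-element subsets of [n] with |P| = C(n, r)/C(q + r - 1, r), then q is a positive integer and every member of P has exactly q + r - 1 elements (so P is a Steiner (n, q+r-1, r)-system). -/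
open Finset

set_option linter.unusedSectionVars false




lemma prod_range_cast_eq_choose (m s : ℕ) :
    ∏ i ∈ Finset.range s, ((m:ℝ) - i) = (m.choose s : ℝ) * (Nat.factorial s) := by
  rcases lt_or_ge m s with h | h
  · rw [Nat.choose_eq_zero_of_lt h]
    rw [Finset.prod_eq_zero (Finset.mem_range.2 h)]
    · ring
    · simp
  · have : ∏ i ∈ Finset.range s, ((m:ℝ) - i) = ((m.descFactorial s : ℕ) : ℝ) := by
      rw [Nat.descFactorial_eq_prod_range]
      push_cast [Nat.cast_prod]
      apply Finset.prod_congr rfl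
      intro i hi
      have : i ≤ m := le_trans (le_of_lt (Finset.mem_range.1 hi)) h
      rw [Nat.cast_sub this]
    rw [this, Nat.descFactorial_eq_factorial_mul_choose]
    push_cast; ring

lemma rbinom_nat_s11 (m s : ℕ) : rbinom m s = (m.choose s : ℝ) := by
  rw [rbinom, prod_range_cast_eq_choose]
  have : (Nat.factorial s : ℝ) ≠ 0 := by positivity
  field_simp




lemma weier (s : ℕ) (u : ℕ → ℝ) (h1 : ∀ i ∈ range s, (-1:ℝ) ≤ u i)
    (h2 : ∀ i ∈ range s, ∀ j ∈ range s, 0 ≤ u i * u j) :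
    1 + ∑ i ∈ range s, u i ≤ ∏ i ∈ range s, (1 + u i) := by
  induction s with
  | zero => simp
  | succ s ih =>
    have h1' : ∀ i ∈ range s, (-1:ℝ) ≤ u i := fun i hi => h1 i (mem_range.2 (lt_trans (mem_range.1 hi) (Nat.lt_succ_self s)))
    have h2' : ∀ i ∈ range s, ∀ j ∈ range s, 0 ≤ u i * u j := fun i hi j hj =>
      h2 i (mem_range.2 (lt_trans (mem_range.1 hi) (Nat.lt_succ_self s)))
        j (mem_range.2 (lt_trans (mem_range.1 hj) (Nat.lt_succ_self s)))
    have hprodnn : (0:ℝ) ≤ ∏ i ∈ range s, (1 + u i) := by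
      apply Finset.prod_nonneg
      intro i hi
      have := h1' i hi; linarith
    have hsmem : s ∈ range (s+1) := mem_range.2 (Nat.lt_succ_self s)
    have hus : (-1:ℝ) ≤ u s := h1 s hsmem
    rw [Finset.prod_range_succ, Finset.sum_range_succ]
    rcases lt_or_ge (1 + ∑ i ∈ range s, u i) 0 with hS | hS
    · -- then u s ≤ 0
      have husle : u s ≤ 0 := by
        by_contra hpos
        push_neg at hpos
        have : ∀ i ∈ range s, 0 ≤ u i := by
          intro i hi
          have := h2 i (mem_range.2 (lt_trans (mem_range.1 hi) (Nat.lt_succ_self s))) s hsmem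
          nlinarith
        have : 0 ≤ ∑ i ∈ range s, u i := Finset.sum_nonneg this
        linarith
      have : (0:ℝ) ≤ (∏ i ∈ range s, (1 + u i)) * (1 + u s) := by
        apply mul_nonneg hprodnn; linarith
      linarith
    · have ihh := ih h1' h2'
      have hSus : 0 ≤ (∑ i ∈ range s, u i) * u s := by
        rw [Finset.sum_mul]
        apply Finset.sum_nonneg
        intro i hi
        exact h2 i (mem_range.2 (lt_trans (mem_range.1 hi) (Nat.lt_succ_self s))) s hsmem
      nlinarith

lemma weier_strict (s : ℕ) (hs : 2 ≤ s) (u : ℕ → ℝ) (h1 : ∀ i ∈ range s, (-1:ℝ) ≤ u i)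
    (h2 : ∀ i ∈ range s, ∀ j ∈ range s, 0 ≤ u i * u j)
    (h3 : ∀ i ∈ range s, u i ≠ 0) :
    1 + ∑ i ∈ range s, u i < ∏ i ∈ range s, (1 + u i) := by
  induction s with
  | zero => omega
  | succ s ih =>
    have hsmem : s ∈ range (s+1) := mem_range.2 (Nat.lt_succ_self s)
    rcases Nat.lt_or_ge s 2 with hs2 | hs2
    · -- s + 1 = 2, so s = 1
      interval_cases s
      · omega
      · have h0 : (0:ℕ) ∈ range 2 := by decide
        have h1m : (1:ℕ) ∈ range 2 := by decide
        have hprod : (0:ℝ) < u 0 * u 1 := by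
          rcases lt_or_ge 0 (u 0 * u 1) with h | h
          · exact h
          · have := h2 0 h0 1 h1m
            have : u 0 * u 1 = 0 := le_antisymm h this
            rcases mul_eq_zero.1 this with h' | h'
            · exact absurd h' (h3 0 h0)
            · exact absurd h' (h3 1 h1m)
        rw [Finset.prod_range_succ, Finset.prod_range_succ, Finset.prod_range_zero,
          Finset.sum_range_succ, Finset.sum_range_succ, Finset.sum_range_zero]
        nlinarith
    · have hmem : ∀ i ∈ range s, i ∈ range (s+1) :=
        fun i hi => mem_range.2 (lt_trans (mem_range.1 hi) (Nat.lt_succ_self s))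
      have h1' : ∀ i ∈ range s, (-1:ℝ) ≤ u i := fun i hi => h1 i (hmem i hi)
      have h2' : ∀ i ∈ range s, ∀ j ∈ range s, 0 ≤ u i * u j :=
        fun i hi j hj => h2 i (hmem i hi) j (hmem j hj)
      have h3' : ∀ i ∈ range s, u i ≠ 0 := fun i hi => h3 i (hmem i hi)
      have hprodnn : (0:ℝ) ≤ ∏ i ∈ range s, (1 + u i) := by
        apply Finset.prod_nonneg
        intro i hi
        have := h1' i hi; linarith
      have hus : (-1:ℝ) ≤ u s := h1 s hsmem
      rw [Finset.prod_range_succ, Finset.sum_range_succ]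
      rcases lt_or_ge (1 + ∑ i ∈ range s, u i) 0 with hS | hS
      · have husle : u s ≤ 0 := by
          by_contra hpos
          push_neg at hpos
          have : ∀ i ∈ range s, 0 ≤ u i := by
            intro i hi
            have := h2 i (hmem i hi) s hsmem
            nlinarith
          have : 0 ≤ ∑ i ∈ range s, u i := Finset.sum_nonneg this
          linarith
        have husne : u s ≠ 0 := h3 s hsmem
        have : (0:ℝ) ≤ (∏ i ∈ range s, (1 + u i)) * (1 + u s) := by
          apply mul_nonneg hprodnn; linarith
        rcases lt_or_eq_of_le husle with h | h
        · linarith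
        · exact absurd h husne
      · have ihh := ih hs2 h1' h2' h3'
        have hSus : 0 ≤ (∑ i ∈ range s, u i) * u s := by
          rw [Finset.sum_mul]
          apply Finset.sum_nonneg
          intro i hi
          exact h2 i (hmem i hi) s hsmem
        rcases lt_or_eq_of_le hus with h | h
        · have h1us : 0 < 1 + u s := by linarith
          nlinarith
        · -- u s = -1
          have hneg : ∀ i ∈ range s, u i < 0 := by
            intro i hi
            have hh := h2 i (hmem i hi) s hsmem
            have : u i ≤ 0 := by nlinarith [h.symm]
            rcases lt_or_eq_of_le this with h' | h'
            · exact h'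
            · exact absurd h' (h3 i (hmem i hi))
          have hSneg : ∑ i ∈ range s, u i < 0 := by
            have : ∃ i, i ∈ range s := ⟨0, mem_range.2 (by omega)⟩
            apply Finset.sum_neg hneg ⟨0, mem_range.2 (by omega)⟩
          have : 1 + u s = 0 := by rw [← h]; ring
          rw [this, mul_zero]
          linarith




lemma factor_pos {s : ℕ} {k : ℝ} (hk : (s:ℝ) - 1 < k) {i : ℕ} (hi : i ∈ range s) :
    0 < k - i := by
  have : (i:ℝ) ≤ (s:ℝ) - 1 := by
    have := mem_range.1 hi
    have : (i:ℝ) + 1 ≤ (s:ℝ) := by exact_mod_cast this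
    linarith
  linarith

lemma rbinom_pos {s : ℕ} {k : ℝ} (hk : (s:ℝ) - 1 < k) : 0 < rbinom k s := by
  rw [rbinom]
  apply div_pos
  · exact Finset.prod_pos (fun i hi => factor_pos hk hi)
  · exact_mod_cast Nat.factorial_pos s

lemma tangent_strict (s : ℕ) (hs : 2 ≤ s) (k : ℝ) (hk : (s:ℝ) - 1 < k) (a : ℕ)
    (hne : (a:ℝ) ≠ k) :
    rbinom k s * (1 + (∑ i ∈ range s, (k - i)⁻¹) * ((a:ℝ) - k)) < (a.choose s : ℝ) := by
  have hfacpos : ∀ i ∈ range s, 0 < k - i := fun i hi => factor_pos hk hi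
  have hfact : (0:ℝ) < (Nat.factorial s : ℝ) := by exact_mod_cast Nat.factorial_pos s
  rcases lt_or_ge a s with ha | ha
  · -- a ≤ s - 1 : RHS = 0, show LHS < 0
    rw [Nat.choose_eq_zero_of_lt ha, Nat.cast_zero]
    have hgk : 0 < rbinom k s := rbinom_pos hk
    have key : 1 < (∑ i ∈ range s, (k - i)⁻¹) * (k - (a:ℝ)) := by
      have hterm : ∀ i ∈ range s, 0 ≤ (k - i)⁻¹ * (k - (a:ℝ)) := by
        intro i hi
        have h1 := hfacpos i hi
        have h2 : ((a:ℝ)) ≤ (s:ℝ) - 1 := by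
          have : (a:ℝ) + 1 ≤ (s:ℝ) := by exact_mod_cast ha
          linarith
        have : 0 < k - (a:ℝ) := by linarith
        positivity
      have hsub : ({0, s-1} : Finset ℕ) ⊆ range s := by
        intro x hx
        simp only [Finset.mem_insert, Finset.mem_singleton] at hx
        rcases hx with h | h <;> (subst h; exact mem_range.2 (by omega))
      have hpair : ∑ i ∈ ({0, s-1} : Finset ℕ), (k - i)⁻¹ * (k - (a:ℝ)) ≤
          ∑ i ∈ range s, (k - i)⁻¹ * (k - (a:ℝ)) := by
        apply Finset.sum_le_sum_of_subset_of_nonneg hsub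
        intro i hi _
        exact hterm i hi
      have hne01 : (0:ℕ) ≠ s - 1 := by omega
      rw [Finset.sum_pair hne01] at hpair
      have hcast : ((s - 1 : ℕ) : ℝ) = (s:ℝ) - 1 := by
        have : 1 ≤ s := by omega
        push_cast [Nat.cast_sub this]
        ring
      have hts : (1:ℝ) ≤ (k - ((s-1:ℕ):ℝ))⁻¹ * (k - (a:ℝ)) := by
        rw [hcast]
        have h1 : 0 < k - ((s:ℝ) - 1) := by linarith
        have h2 : k - ((s:ℝ)-1) ≤ k - (a:ℝ) := by
          have : (a:ℝ) ≤ (s:ℝ) - 1 := by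
            have : (a:ℝ) + 1 ≤ (s:ℝ) := by exact_mod_cast ha
            linarith
          linarith
        calc (1:ℝ) = (k - ((s:ℝ)-1))⁻¹ * (k - ((s:ℝ)-1)) := by
              field_simp
          _ ≤ (k - ((s:ℝ)-1))⁻¹ * (k - (a:ℝ)) := by
              apply mul_le_mul_of_nonneg_left h2
              positivity
      have ht0 : (0:ℝ) < (k - ((0:ℕ):ℝ))⁻¹ * (k - (a:ℝ)) := by
        have h1 : 0 < k - ((0:ℕ):ℝ) := hfacpos 0 (mem_range.2 (by omega))
        have h2 : 0 < k - (a:ℝ) := by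
          have : (a:ℝ) ≤ (s:ℝ) - 1 := by
            have : (a:ℝ) + 1 ≤ (s:ℝ) := by exact_mod_cast ha
            linarith
          linarith
        positivity
      have : (∑ i ∈ range s, (k - i)⁻¹) * (k - (a:ℝ)) =
          ∑ i ∈ range s, (k - i)⁻¹ * (k - (a:ℝ)) := by rw [Finset.sum_mul]
      rw [this]
      linarith
    nlinarith [rbinom_pos hk, key]
  · -- a ≥ s
    set u : ℕ → ℝ := fun i => ((a:ℝ) - k) * (k - i)⁻¹ with hu
    have h1 : ∀ i ∈ range s, (-1:ℝ) ≤ u i := by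
      intro i hi
      have hf := hfacpos i hi
      have hai : (0:ℝ) ≤ (a:ℝ) - i := by
        have hi' := mem_range.1 hi
        have : (i:ℝ) < (a:ℝ) := by exact_mod_cast lt_of_lt_of_le hi' ha
        linarith
      rw [hu]
      simp only
      have heq : ((a:ℝ) - k) * (k - i)⁻¹ + 1 = ((a:ℝ) - i) * (k-i)⁻¹ := by
        field_simp
        ring
      nlinarith [mul_nonneg hai (le_of_lt (inv_pos.2 hf))]
    have h2 : ∀ i ∈ range s, ∀ j ∈ range s, 0 ≤ u i * u j := by
      intro i hi j hj
      have hfi := hfacpos i hi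
      have hfj := hfacpos j hj
      rw [hu]; simp only
      have : ((a:ℝ) - k) * (k - i)⁻¹ * (((a:ℝ) - k) * (k - j)⁻¹) =
          ((a:ℝ)-k)^2 * ((k-i)⁻¹ * (k-j)⁻¹) := by ring
      rw [this]
      positivity
    have h3 : ∀ i ∈ range s, u i ≠ 0 := by
      intro i hi
      have hfi := hfacpos i hi
      rw [hu]; simp only
      apply mul_ne_zero
      · intro h; apply hne; linarith [sub_eq_zero.1 h]
      · exact inv_ne_zero (by linarith)
    have hw := weier_strict s hs u h1 h2 h3
    have hprod : ∏ i ∈ range s, (k - i) * (1 + u i) = ∏ i ∈ range s, ((a:ℝ) - i) := by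
      apply Finset.prod_congr rfl
      intro i hi
      have hfi := hfacpos i hi
      rw [hu]; simp only
      field_simp
      ring
    have hsum : ∑ i ∈ range s, u i = (∑ i ∈ range s, (k - i)⁻¹) * ((a:ℝ) - k) := by
      rw [Finset.sum_mul]  -- RHS = Σ (k-i)⁻¹ * (a-k)
      apply Finset.sum_congr rfl
      intro i hi
      rw [hu]; ring
    have hF : 0 < ∏ i ∈ range s, (k - i) := Finset.prod_pos hfacpos
    have hchain : (∏ i ∈ range s, (k - i)) * (1 + (∑ i ∈ range s, (k - i)⁻¹) * ((a:ℝ) - k))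
        < ∏ i ∈ range s, ((a:ℝ) - i) := by
      rw [← hprod, Finset.prod_mul_distrib, ← hsum]
      exact (mul_lt_mul_iff_right₀ hF).2 hw
    rw [prod_range_cast_eq_choose] at hchain
    rw [rbinom]
    rw [div_mul_eq_mul_div, div_lt_iff₀ hfact]
    linarith
  
lemma tangent_le (s : ℕ) (hs : 2 ≤ s) (k : ℝ) (hk : (s:ℝ) - 1 < k) (a : ℕ) :
    rbinom k s * (1 + (∑ i ∈ range s, (k - i)⁻¹) * ((a:ℝ) - k)) ≤ (a.choose s : ℝ) := by
  by_cases hne : (a:ℝ) = k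
  · rw [hne]
    simp only [sub_self, mul_zero, add_zero, mul_one]
    rw [← hne, rbinom_nat_s11]
  · exact le_of_lt (tangent_strict s hs k hk a hne)


variable {X : Type*} [DecidableEq X]

def IsCPOn (G : Finset X) (s : ℕ) (P : Finset (Finset X)) : Prop :=
  (∀ A ∈ P, A ⊆ G ∧ A ≠ G) ∧
  ∀ S : Finset X, S ⊆ G → S.card = s → ∃! A, A ∈ P ∧ S ⊆ A

lemma choose_sum {G : Finset X} {s : ℕ} {P : Finset (Finset X)}
    (h : IsCPOn G s P) :
    ∑ A ∈ P, A.card.choose s = G.card.choose s := by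
  classical
  set f : Finset X → Finset X :=
    fun S => if h' : ∃! A, A ∈ P ∧ S ⊆ A then h'.exists.choose else ∅ with hf
  have hfspec : ∀ S : Finset X, S ⊆ G → S.card = s → f S ∈ P ∧ S ⊆ f S := by
    intro S hSG hScard
    have h' := h.2 S hSG hScard
    rw [hf]
    simp only [dif_pos h']
    exact h'.exists.choose_spec
  have hfeq : ∀ S : Finset X, S.card = s → ∀ A ∈ P, S ⊆ A → f S = A := by
    intro S hScard A hA hSA
    have hSG : S ⊆ G := hSA.trans (h.1 A hA).1
    have h' := h.2 S hSG hScard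
    rw [hf]
    simp only [dif_pos h']
    exact h'.unique h'.exists.choose_spec ⟨hA, hSA⟩
  have hmaps : ∀ S ∈ G.powersetCard s, f S ∈ P := by
    intro S hS
    rw [mem_powersetCard] at hS
    exact (hfspec S hS.1 hS.2).1
  have := Finset.card_eq_sum_card_fiberwise hmaps
  rw [Finset.card_powersetCard] at this
  rw [this]
  apply Finset.sum_congr rfl
  intro A hA
  rw [← Finset.card_powersetCard s A]
  congr 1
  ext S
  simp only [mem_filter, mem_powersetCard]
  constructor
  · rintro ⟨hSA, hcard⟩
    exact ⟨⟨hSA.trans (h.1 A hA).1, hcard⟩, hfeq S hcard A hA hSA⟩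
  · rintro ⟨⟨hSG, hcard⟩, hfS⟩
    refine ⟨?_, hcard⟩
    rw [← hfS]
    exact (hfspec S hSG hcard).2

lemma deg_sum {G : Finset X} {P : Finset (Finset X)}
    (h : ∀ A ∈ P, A ⊆ G) :
    ∑ v ∈ G, (P.filter (fun A => v ∈ A)).card = ∑ A ∈ P, A.card := by
  classical
  have : ∀ v, (P.filter (fun A => v ∈ A)).card = ∑ A ∈ P, if v ∈ A then 1 else 0 := by
    intro v
    rw [Finset.card_filter]
  simp_rw [this]
  rw [Finset.sum_comm]
  apply Finset.sum_congr rfl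
  intro A hA
  rw [← Finset.card_filter]
  congr 1
  ext x
  simp only [mem_filter]
  exact ⟨fun hx => hx.2, fun hx => ⟨h A hA hx, hx⟩⟩

lemma link_lemma {G : Finset X} {s : ℕ} {P : Finset (Finset X)}
    (h : IsCPOn G (s+1) P) {v : X} (hv : v ∈ G) :
    IsCPOn (G.erase v) s ((P.filter (fun A => v ∈ A)).image (fun A => A.erase v)) ∧
    ((P.filter (fun A => v ∈ A)).image (fun A => A.erase v)).card
      = (P.filter (fun A => v ∈ A)).card := by
  classical
  have hinj : ∀ A ∈ P.filter (fun A => v ∈ A), ∀ B ∈ P.filter (fun A => v ∈ A),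
      A.erase v = B.erase v → A = B := by
    intro A hA B hB hAB
    rw [mem_filter] at hA hB
    rw [← Finset.insert_erase hA.2, ← Finset.insert_erase hB.2, hAB]
  constructor
  · constructor
    · intro A' hA'
      rw [mem_image] at hA'
      obtain ⟨A, hA, rfl⟩ := hA'
      rw [mem_filter] at hA
      constructor
      · exact Finset.erase_subset_erase v (h.1 A hA.1).1
      · intro hcontra
        apply (h.1 A hA.1).2
        rw [← Finset.insert_erase hA.2, hcontra, Finset.insert_erase hv]
    · intro S hSG hScard
      have hvS : v ∉ S := fun hvs => (Finset.notMem_erase v G) (hSG hvs)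
      have hSG' : insert v S ⊆ G := by
        intro x hx
        rw [Finset.mem_insert] at hx
        rcases hx with rfl | hx
        · exact hv
        · exact (Finset.erase_subset v G) (hSG hx)
      have hScard' : (insert v S).card = s + 1 := by
        rw [Finset.card_insert_of_notMem hvS, hScard]
      obtain ⟨A, ⟨hAP, hSA⟩, huniq⟩ := h.2 (insert v S) hSG' hScard'
      have hvA : v ∈ A := hSA (Finset.mem_insert_self v S)
      refine ⟨A.erase v, ⟨?_, ?_⟩, ?_⟩
      · rw [mem_image]
        exact ⟨A, mem_filter.2 ⟨hAP, hvA⟩, rfl⟩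
      · intro x hx
        rw [Finset.mem_erase]
        exact ⟨fun hxv => hvS (hxv ▸ hx), hSA (Finset.mem_insert_of_mem hx)⟩
      · rintro B' ⟨hB', hSB'⟩
        rw [mem_image] at hB'
        obtain ⟨B, hB, rfl⟩ := hB'
        rw [mem_filter] at hB
        have : B = A := by
          apply huniq
          refine ⟨hB.1, ?_⟩
          intro x hx
          rw [Finset.mem_insert] at hx
          rcases hx with rfl | hx
          · exact hB.2
          · exact (Finset.erase_subset v B) (hSB' hx)
        rw [this]
  · exact Finset.card_image_of_injOn hinj



lemma cp_fun {G : Finset X} {s : ℕ} {P : Finset (Finset X)} (h : IsCPOn G s P) :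
    ∃ f : Finset X → Finset X,
      (∀ S, S ⊆ G → S.card = s → (f S ∈ P ∧ S ⊆ f S)) ∧
      (∀ S, S.card = s → ∀ A ∈ P, S ⊆ A → f S = A) := by
  classical
  refine ⟨fun S => if h' : ∃! A, A ∈ P ∧ S ⊆ A then h'.exists.choose else ∅, ?_, ?_⟩
  · intro S hSG hScard
    have h' := h.2 S hSG hScard
    simp only [dif_pos h']
    exact h'.exists.choose_spec
  · intro S hScard A hA hSA
    have hSG : S ⊆ G := hSA.trans (h.1 A hA).1
    have h' := h.2 S hSG hScard
    simp only [dif_pos h']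
    exact h'.unique h'.exists.choose_spec ⟨hA, hSA⟩

lemma dBE {G : Finset X} {P : Finset (Finset X)} (h : IsCPOn G 2 P) (hG : 3 ≤ G.card) :
    G.card ≤ P.card := by
  classical
  set P' := P.filter (fun A => 2 ≤ A.card) with hP'def
  have hP'sub : P' ⊆ P := Finset.filter_subset _ _
  have hP' : IsCPOn G 2 P' := by
    constructor
    · intro A hA; exact h.1 A (hP'sub hA)
    · intro S hSG hScard
      obtain ⟨A, ⟨hAP, hSA⟩, huniq⟩ := h.2 S hSG hScard
      have hA2 : 2 ≤ A.card := hScard ▸ Finset.card_le_card hSA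
      exact ⟨A, ⟨mem_filter.2 ⟨hAP, hA2⟩, hSA⟩, fun B hB => huniq B ⟨hP'sub hB.1, hB.2⟩⟩
  suffices hsuff : G.card ≤ P'.card by
    exact le_trans hsuff (Finset.card_le_card hP'sub)
  obtain ⟨f, hfspec, hfeq⟩ := cp_fun hP'
  set m := G.card with hm
  set t := P'.card with ht
  by_contra hcon
  push_neg at hcon   -- t < m
  -- pair sets and their lines
  have hpair : ∀ v ∈ G, ∀ u ∈ G, v ≠ u → f {v, u} ∈ P' ∧ ({v, u} : Finset X) ⊆ f {v, u} := by
    intro v hv u hu hvu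
    apply hfspec
    · intro x hx
      simp only [Finset.mem_insert, Finset.mem_singleton] at hx
      rcases hx with rfl | rfl
      · exact hv
      · exact hu
    · rw [Finset.card_insert_of_notMem (by simpa using hvu), Finset.card_singleton]
  -- L1 : degrees
  have hL1 : ∀ v ∈ G, ∀ L ∈ P', v ∉ L →
      L.card ≤ (P'.filter (fun A => v ∈ A)).card := by
    intro v hv L hL hvL
    apply Finset.card_le_card_of_injOn (fun u => f {v, u})
    · intro u hu
      have huG : u ∈ G := (hP'.1 L hL).1 hu
      have hvu : v ≠ u := fun hh => hvL (hh ▸ hu)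
      have := hpair v hv u huG hvu
      rw [Finset.mem_coe, mem_filter]
      exact ⟨this.1, this.2 (Finset.mem_insert_self v _)⟩
    · intro u hu u' hu' heq
      by_contra hne
      simp only at heq
      have huG : u ∈ G := (hP'.1 L hL).1 hu
      have hu'G : u' ∈ G := (hP'.1 L hL).1 hu'
      have hvu : v ≠ u := fun hh => hvL (hh ▸ hu)
      have hvu' : v ≠ u' := fun hh => hvL (hh ▸ hu')
      have h1 := hpair v hv u huG hvu
      have h2 := hpair v hv u' hu'G hvu'
      have humem : u ∈ f {v, u} := h1.2 (by simp)
      have hu'mem : u' ∈ f {v, u} := by rw [heq]; exact h2.2 (by simp)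
      -- {u, u'} ⊆ f {v,u} and also ⊆ L, both are lines
      have hsub1 : ({u, u'} : Finset X) ⊆ f {v, u} := by
        intro x hx
        simp only [Finset.mem_insert, Finset.mem_singleton] at hx
        rcases hx with rfl | rfl
        · exact humem
        · exact hu'mem
      have hsubL : ({u, u'} : Finset X) ⊆ L := by
        intro x hx
        simp only [Finset.mem_insert, Finset.mem_singleton] at hx
        rcases hx with rfl | rfl
        · exact hu
        · exact hu'
      have hcard2 : ({u, u'} : Finset X).card = 2 := by
        rw [Finset.card_insert_of_notMem (by simpa using hne), Finset.card_singleton]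
      have e1 := hfeq {u, u'} hcard2 (f {v, u}) h1.1 hsub1
      have e2 := hfeq {u, u'} hcard2 L hL hsubL
      have : L = f {v, u} := by rw [← e1, ← e2]
      rw [this] at hvL
      exact hvL (h1.2 (Finset.mem_insert_self v _))
  -- L2 : every point misses a line
  have hL2 : ∀ v ∈ G, ∃ L ∈ P', v ∉ L := by
    intro v hv
    by_contra hcon2
    push_neg at hcon2
    obtain ⟨u, hu⟩ : (G.erase v).Nonempty := by
      apply Finset.card_pos.1
      rw [Finset.card_erase_of_mem hv]
      omega
    have huG : u ∈ G := Finset.mem_of_mem_erase hu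
    have hvu : v ≠ u := fun hh => (Finset.mem_erase.1 hu).1 hh.symm
    have hline := hpair v hv u huG hvu
    apply (hP'.1 _ hline.1).2
    apply Finset.Subset.antisymm (hP'.1 _ hline.1).1
    intro x hx
    by_cases hxv : x = v
    · subst hxv; exact hline.2 (by simp)
    by_cases hxu : x = u
    · subst hxu; exact hline.2 (by simp)
    -- x ∉ {v, u} : use line through {u, x}
    have hux : u ≠ x := fun hh => hxu hh.symm
    have hline2 := hpair u huG x hx hux
    have hvin : v ∈ f {u, x} := hcon2 _ hline2.1
    have hsub : ({v, u} : Finset X) ⊆ f {u, x} := by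
      intro y hy
      simp only [Finset.mem_insert, Finset.mem_singleton] at hy
      rcases hy with rfl | rfl
      · exact hvin
      · exact hline2.2 (by simp)
    have hcard2 : ({v, u} : Finset X).card = 2 := by
      rw [Finset.card_insert_of_notMem (by simpa using hvu), Finset.card_singleton]
    have := hfeq {v, u} hcard2 (f {u, x}) hline2.1 hsub
    rw [this]
    exact hline2.2 (Finset.mem_insert_of_mem (Finset.mem_singleton_self x))
  -- degrees strictly below t
  set D : X → ℕ := fun v => (P'.filter (fun A => v ∈ A)).card with hD
  have hdeglt : ∀ v ∈ G, D v < t := by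
    intro v hv
    obtain ⟨L, hL, hvL⟩ := hL2 v hv
    apply Finset.card_lt_card
    rw [Finset.ssubset_iff_of_subset (Finset.filter_subset _ _)]
    exact ⟨L, hL, by simp [hvL]⟩
  have hcardlt : ∀ L ∈ P', L.card < m := by
    intro L hL
    apply Finset.card_lt_card
    rw [Finset.ssubset_iff_subset_ne]
    exact ⟨(hP'.1 L hL).1, (hP'.1 L hL).2⟩
  have hcard1 : ∀ L ∈ P', 1 ≤ L.card := by
    intro L hL
    have := (mem_filter.1 hL).2
    omega
  set I := (G ×ˢ P').filter (fun p => p.1 ∉ p.2) with hI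
  obtain ⟨v₀, hv₀⟩ : G.Nonempty := Finset.card_pos.1 (by omega)
  obtain ⟨L₀, hL₀, hv₀L₀⟩ := hL2 v₀ hv₀
  have hIne : I.Nonempty := by
    refine ⟨(v₀, L₀), ?_⟩
    rw [hI, mem_filter, Finset.mem_product]
    exact ⟨⟨hv₀, hL₀⟩, hv₀L₀⟩
  have hcompl : ∀ v, (P'.filter (fun L => v ∉ L)).card = t - D v := by
    intro v
    have h2 : D v + (P'.filter (fun L => v ∉ L)).card = t := by
      have := Finset.card_filter_add_card_filter_not (s := P') (p := fun A => v ∈ A)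
      simpa using this
    omega
  have hcompl2 : ∀ L ∈ P', (G.filter (fun v => v ∉ L)).card = m - L.card := by
    intro L hL
    have h1 : (G.filter (fun v => v ∈ L)) = L :=
      Finset.ext fun x => ⟨fun hx => (mem_filter.1 hx).2,
        fun hx => mem_filter.2 ⟨(hP'.1 L hL).1 hx, hx⟩⟩
    have h2 := Finset.card_filter_add_card_filter_not (s := G) (p := fun v => v ∈ L)
    rw [h1] at h2
    simp only [hm]
    omega
  set c : X → ℝ := fun v => 1 / (m * ((t - D v : ℕ) : ℝ)) with hc
  set e : Finset X → ℝ := fun L => 1 / (t * ((m - L.card : ℕ) : ℝ)) with he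
  have htpos : 0 < t := by
    have := Finset.card_pos.2 ⟨L₀, hL₀⟩
    omega
  have hsum1 : ∑ p ∈ I, c p.1 = 1 := by
    rw [hI, Finset.sum_filter, Finset.sum_product]
    have hinner : ∀ v ∈ G, (∑ L ∈ P', if v ∉ L then c v else 0) = 1 / m := by
      intro v hv
      rw [← Finset.sum_filter, Finset.sum_const, hcompl v, nsmul_eq_mul, hc]
      have hnz : ((t - D v : ℕ) : ℝ) ≠ 0 := by
        have h3 := hdeglt v hv
        have h4 : 0 < t - D v := by omega
        exact_mod_cast h4.ne'
      have hmnz : (m:ℝ) ≠ 0 := by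
        have : 0 < m := by omega
        exact_mod_cast this.ne'
      field_simp
    rw [Finset.sum_congr rfl hinner, Finset.sum_const, nsmul_eq_mul]
    have hmnz : (m:ℝ) ≠ 0 := by
      have : 0 < m := by omega
      exact_mod_cast this.ne'
    field_simp
    rw [hm]
  have hsum2 : ∑ p ∈ I, e p.2 = 1 := by
    rw [hI, Finset.sum_filter, Finset.sum_product_right]
    have hinner : ∀ L ∈ P', (∑ v ∈ G, if v ∉ L then e L else 0) = 1 / t := by
      intro L hL
      rw [← Finset.sum_filter, Finset.sum_const, hcompl2 L hL, nsmul_eq_mul, he]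
      have hnz : ((m - L.card : ℕ) : ℝ) ≠ 0 := by
        have h3 := hcardlt L hL
        have h4 : 0 < m - L.card := by omega
        exact_mod_cast h4.ne'
      have htnz : (t:ℝ) ≠ 0 := by exact_mod_cast htpos.ne'
      field_simp
    rw [Finset.sum_congr rfl hinner, Finset.sum_const, nsmul_eq_mul]
    have htnz : (t:ℝ) ≠ 0 := by exact_mod_cast htpos.ne'
    field_simp
    rw [ht]
  have hpt : ∀ p ∈ I, e p.2 < c p.1 := by
    intro p hp
    rw [hI, mem_filter, Finset.mem_product] at hp
    obtain ⟨⟨hv, hL⟩, hnot⟩ := hp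
    have hda : p.2.card ≤ D p.1 := hL1 p.1 hv p.2 hL hnot
    have hdlt := hdeglt p.1 hv
    have halt := hcardlt p.2 hL
    have ha1 := hcard1 p.2 hL
    show (1:ℝ) / (↑t * ↑(m - p.2.card)) < 1 / (↑m * ↑(t - D p.1))
    have hc1 : ((t - D p.1 : ℕ) : ℝ) = (t:ℝ) - (D p.1 : ℝ) := by
      rw [Nat.cast_sub (le_of_lt hdlt)]
    have hc2 : ((m - p.2.card : ℕ) : ℝ) = (m:ℝ) - (p.2.card : ℝ) := by
      rw [Nat.cast_sub (le_of_lt halt)]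
    rw [hc1, hc2]
    have hkey : (m:ℝ) * ((t:ℝ) - (D p.1 : ℝ)) < (t:ℝ) * ((m:ℝ) - (p.2.card:ℝ)) := by
      have h1 : (p.2.card:ℝ) ≤ (D p.1 : ℝ) := by exact_mod_cast hda
      have h2 : (t:ℝ) < (m:ℝ) := by exact_mod_cast hcon
      have h3 : (1:ℝ) ≤ (p.2.card:ℝ) := by exact_mod_cast ha1
      nlinarith
    have hpos : (0:ℝ) < (m:ℝ) * ((t:ℝ) - (D p.1 : ℝ)) := by
      have h2 : (0:ℝ) < (m:ℝ) := by
        have : 0 < m := by omega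
        exact_mod_cast this
      have h3 : (D p.1 : ℝ) < (t:ℝ) := by exact_mod_cast hdlt
      nlinarith
    exact one_div_lt_one_div_of_lt hpos hkey
  have := Finset.sum_lt_sum_of_nonempty hIne hpt
  rw [hsum1, hsum2] at this
  exact lt_irrefl 1 this



lemma rbinom_succ (k : ℝ) (s : ℕ) : rbinom k (s+1) * (s+1) = k * rbinom (k-1) s := by
  rw [rbinom, rbinom]
  have hprod : ∏ i ∈ Finset.range (s+1), (k - i) =
      (∏ i ∈ Finset.range s, ((k-1) - i)) * k := by
    rw [Finset.prod_range_succ']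
    congr 1
    · apply Finset.prod_congr rfl
      intro i _
      push_cast
      ring
    · simp
  rw [hprod, Nat.factorial_succ]
  have h1 : ((s+1) * Nat.factorial s : ℕ) = ((s:ℝ)+1) * (Nat.factorial s : ℝ) := by
    push_cast; ring
  rw [h1]
  have hs : (Nat.factorial s : ℝ) ≠ 0 := by positivity
  have hs1 : ((s:ℝ)+1) ≠ 0 := by positivity
  field_simp

set_option maxHeartbeats 1000000 in
lemma step_lemma {X : Type*} [DecidableEq X] (s : ℕ) (hs : 2 ≤ s)
    (G : Finset X) (P : Finset (Finset X)) (q : ℝ) (hq : 1 < q)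
    (h : IsCPOn G (s+1) P)
    (hG : (G.card : ℝ) = q^2 + q + s)
    (hlinks : ∀ v ∈ G, (((G.erase v).card).choose s : ℝ) ≤
        ((P.filter (fun A => v ∈ A)).card : ℝ) * rbinom (q + s - 1) s) :
    rbinom (G.card) (s+1) ≤ (P.card : ℝ) * rbinom (q + s) (s+1) ∧
    (∀ A₀, A₀ ∈ P → ((A₀.card:ℝ) ≠ q + s) →
      rbinom (G.card) (s+1) < (P.card : ℝ) * rbinom (q + s) (s+1)) := by
  classical
  set m := G.card with hm
  set k : ℝ := q + s with hkdef
  have hsk : ((s+1:ℕ):ℝ) - 1 < k := by push_cast; nlinarith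
  have hgk : 0 < rbinom k (s+1) := rbinom_pos hsk
  set gk : ℝ := rbinom k (s+1) with hgkdef
  set T : ℝ := ∑ i ∈ range (s+1), (k - i)⁻¹ with hTdef
  set σ : ℝ := rbinom (q + s - 1) s with hσdef
  have hσpos : 0 < σ := by
    apply rbinom_pos
    nlinarith
  have hTpos : 0 < T := by
    rw [hTdef]
    apply Finset.sum_pos (fun i hi => inv_pos.2 (factor_pos hsk hi)) nonempty_range_add_one
  set s1 : ℝ := (s:ℝ) + 1 with hs1def
  have hs1ge : (3:ℝ) ≤ s1 := by
    rw [hs1def]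
    have : (2:ℝ) ≤ (s:ℝ) := by exact_mod_cast hs
    linarith
  have hkpos : 0 < k := by rw [hkdef]; positivity
  have hkσ : k * σ = gk * s1 := by
    rw [hgkdef, hs1def]
    have h1 := rbinom_succ k s
    have h2 : k - 1 = q + s - 1 := by rw [hkdef]; try ring
    rw [h2] at h1
    rw [hσdef]
    push_cast at h1
    linarith
  have hTk : s1 ≤ T * k := by
    have hterm : ∀ i ∈ range (s+1), (1:ℝ) ≤ (k - i)⁻¹ * k := by
      intro i hi
      have h1 : 0 < k - i := factor_pos hsk hi
      have h2 : k - i ≤ k := by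
        have : (0:ℝ) ≤ i := Nat.cast_nonneg i
        linarith
      rw [inv_mul_eq_div, le_div_iff₀ h1]
      linarith
    have := Finset.sum_le_sum hterm
    rw [Finset.sum_const, Finset.card_range, nsmul_eq_mul, mul_one] at this
    rw [hTdef]
    rw [Finset.sum_mul]
    calc s1 = ((s+1:ℕ):ℝ) := by rw [hs1def]; push_cast; ring
    _ ≤ ∑ i ∈ range (s+1), (k - i)⁻¹ * k := this
  -- tangent bounds
  have htan : ∀ A ∈ P, gk * (1 + T * ((A.card:ℝ) - k)) ≤ ((A.card).choose (s+1) : ℝ) :=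
    fun A _ => tangent_le (s+1) (by omega) k hsk A.card
  have hM : ∑ A ∈ P, (((A.card).choose (s+1) : ℕ) : ℝ) = ((m.choose (s+1) : ℕ) : ℝ) := by
    rw [← Nat.cast_sum, choose_sum h]
  have hexpand : ∑ A ∈ P, gk * (1 + T * ((A.card:ℝ) - k))
      = (P.card:ℝ) * gk + gk * T * ((∑ A ∈ P, (A.card:ℝ)) - (P.card:ℝ) * k) := by
    have e1 : ∀ a : ℝ, gk * (1 + T * (a - k)) = gk*T*a + (gk - gk*T*k) := fun a => by ring
    simp_rw [e1]
    rw [Finset.sum_add_distrib, ← Finset.mul_sum, Finset.sum_const, nsmul_eq_mul]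
    ring
  set S : ℝ := ∑ A ∈ P, (A.card:ℝ) with hSdef
  have hS : S = ∑ v ∈ G, ((P.filter (fun A => v ∈ A)).card : ℝ) := by
    rw [hSdef, ← Nat.cast_sum, ← Nat.cast_sum, deg_sum (fun A hA => (h.1 A hA).1)]
  have hmge : s + 3 ≤ m := by
    have h1 : ((s+2:ℕ):ℝ) < (m:ℝ) := by push_cast; nlinarith
    have h2 : s + 2 < m := by exact_mod_cast h1
    omega
  have herase : ∀ v ∈ G, (G.erase v).card = m - 1 := fun v hv => Finset.card_erase_of_mem hv
  have hlink2 : (m:ℝ) * (((m-1).choose s : ℕ) : ℝ) ≤ S * σ := by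
    rw [hS, Finset.sum_mul]
    calc (m:ℝ) * (((m-1).choose s : ℕ) : ℝ)
        = ∑ _v ∈ G, (((m-1).choose s : ℕ) : ℝ) := by
          rw [Finset.sum_const, nsmul_eq_mul, hm]
      _ ≤ ∑ v ∈ G, ((P.filter (fun A => v ∈ A)).card : ℝ) * σ := by
          apply Finset.sum_le_sum
          intro v hv
          have := hlinks v hv
          rw [herase v hv] at this
          exact this
  have hid : (m:ℝ) * (((m-1).choose s : ℕ) : ℝ) = s1 * ((m.choose (s+1) : ℕ) : ℝ) := by
    have h0 : m - 1 + 1 = m := by omega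
    have h1 := Nat.add_one_mul_choose_eq (m-1) s
    rw [h0] at h1
    have h2 : (m * ((m-1).choose s) : ℕ) = ((m.choose (s+1)) * (s+1) : ℕ) := h1
    have h3 : ((m * ((m-1).choose s) : ℕ) : ℝ) = (((m.choose (s+1)) * (s+1) : ℕ) : ℝ) := by
      exact_mod_cast congrArg (fun x : ℕ => (x:ℝ)) h2
    push_cast at h3
    rw [hs1def]
    push_cast
    linarith
  have hMσ : s1 * ((m.choose (s+1) : ℕ) : ℝ) ≤ S * σ := by rw [← hid]; exact hlink2
  -- the main algebraic implication
  have halg : ∀ t M' : ℝ, 0 ≤ t →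
      (t*gk + gk*T*(S - t*k) ≤ M') → (s1 * M' ≤ S*σ) → M' ≤ t*gk := by
    intro t M' ht h1 h2
    have hu : (0:ℝ) ≤ gk*T := by positivity
    have e1 : gk*T*(s1*M') ≤ gk*T*(S*σ) := mul_le_mul_of_nonneg_left h2 hu
    have e2 : σ*(t*gk + gk*T*(S - t*k)) ≤ σ*M' := mul_le_mul_of_nonneg_left h1 hσpos.le
    have c2' : σ*k = gk*s1 := by linarith [hkσ]
    have e3 : σ*(gk*T*(t*k)) = gk*T*t*(gk*s1) := by
      calc σ*(gk*T*(t*k)) = (gk*T*t)*(σ*k) := by ring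
      _ = (gk*T*t)*(gk*s1) := by rw [c2']
      _ = gk*T*t*(gk*s1) := by ring
    have hfac : (M' - t*gk) * (gk*T*s1 - σ) ≤ 0 := by linarith [e1, e2, e3]
    have e4 : gk*(s1*s1) ≤ gk*((T*k)*s1) := by
      apply mul_le_mul_of_nonneg_left _ hgk.le
      apply mul_le_mul_of_nonneg_right hTk
      linarith
    have hpos : 0 < gk*T*s1 - σ := by
      have c1 : (gk*T*s1 - σ)*k = gk*((T*k)*s1) - σ*k := by ring
      have c2 : σ*k = gk*s1 := by linarith [hkσ]
      have h6 : (0:ℝ) < gk*s1 := mul_pos hgk (by linarith)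
      have c3 : (0:ℝ) < gk*(s1*s1) - gk*s1 := by nlinarith [h6, hs1ge]
      have hXk : 0 < (gk*T*s1 - σ)*k := by linarith [e4, c1, c2, c3]
      by_contra hcon'
      push_neg at hcon'
      have := mul_nonpos_of_nonpos_of_nonneg hcon' hkpos.le
      linarith
    by_contra hcon
    push_neg at hcon
    have := mul_pos (sub_pos.2 hcon) hpos
    linarith
  have halgs : ∀ t M' : ℝ, 0 ≤ t →
      (t*gk + gk*T*(S - t*k) < M') → (s1 * M' ≤ S*σ) → M' < t*gk := by
    intro t M' ht h1 h2
    have hu : (0:ℝ) ≤ gk*T := by positivity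
    have e1 : gk*T*(s1*M') ≤ gk*T*(S*σ) := mul_le_mul_of_nonneg_left h2 hu
    have e2 : σ*(t*gk + gk*T*(S - t*k)) ≤ σ*M' := by
      apply mul_le_mul_of_nonneg_left h1.le hσpos.le
    have e2s : σ*(t*gk + gk*T*(S - t*k)) < σ*M' := by
      apply mul_lt_mul_of_pos_left h1 hσpos
    have c2' : σ*k = gk*s1 := by linarith [hkσ]
    have e3 : σ*(gk*T*(t*k)) = gk*T*t*(gk*s1) := by
      calc σ*(gk*T*(t*k)) = (gk*T*t)*(σ*k) := by ring
      _ = (gk*T*t)*(gk*s1) := by rw [c2']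
      _ = gk*T*t*(gk*s1) := by ring
    have hfac : (M' - t*gk) * (gk*T*s1 - σ) < 0 := by linarith [e1, e2s, e3]
    have e4 : gk*(s1*s1) ≤ gk*((T*k)*s1) := by
      apply mul_le_mul_of_nonneg_left _ hgk.le
      apply mul_le_mul_of_nonneg_right hTk
      linarith
    have hpos : 0 < gk*T*s1 - σ := by
      have e5 : (gk*T*s1 - σ)*k = gk*(T*k)*s1 - gk*s1 := by linear_combination -hkσ
      nlinarith [e4, hgk, hkpos]
    nlinarith [hfac, hpos]
  -- assemble
  have hchain : (P.card:ℝ)*gk + gk*T*(S - (P.card:ℝ)*k) ≤ ((m.choose (s+1) : ℕ) : ℝ) := by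
    rw [← hM, ← hexpand]
    exact Finset.sum_le_sum htan
  have hrb : rbinom (m) (s+1) = ((m.choose (s+1) : ℕ) : ℝ) := rbinom_nat_s11 m (s+1)
  constructor
  · rw [hrb]
    have := halg (P.card:ℝ) ((m.choose (s+1) : ℕ) : ℝ) (Nat.cast_nonneg _) hchain hMσ
    calc ((m.choose (s+1) : ℕ) : ℝ) ≤ (P.card:ℝ) * gk := this
    _ = (P.card:ℝ) * rbinom (q+s) (s+1) := by rw [hgkdef, hkdef]
  · intro A₀ hA₀ hbad
    have hchainS : (P.card:ℝ)*gk + gk*T*(S - (P.card:ℝ)*k) < ((m.choose (s+1) : ℕ) : ℝ) := by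
      rw [← hM, ← hexpand]
      apply Finset.sum_lt_sum htan
      exact ⟨A₀, hA₀, tangent_strict (s+1) (by omega) k hsk A₀.card hbad⟩
    rw [hrb]
    have := halgs (P.card:ℝ) ((m.choose (s+1) : ℕ) : ℝ) (Nat.cast_nonneg _) hchainS hMσ
    calc ((m.choose (s+1) : ℕ) : ℝ) < (P.card:ℝ) * gk := this
    _ = (P.card:ℝ) * rbinom (q+s) (s+1) := by rw [hgkdef, hkdef]

lemma main_ineq {X : Type*} [DecidableEq X] :
    ∀ (s : ℕ), 2 ≤ s → ∀ (G : Finset X) (P : Finset (Finset X)) (q : ℝ),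
      1 < q → IsCPOn G s P → ((G.card:ℝ) = q^2 + q + s - 1) →
      rbinom (G.card) s ≤ (P.card:ℝ) * rbinom (q + s - 1) s := by
  intro s hs
  induction s, hs using Nat.le_induction with
  | base =>
    intro G P q hq h hG
    have hm1 : (G.card:ℝ) = q^2 + q + 1 := by rw [hG]; push_cast; ring
    have h3 : 3 ≤ G.card := by
      have : ((3:ℕ):ℝ) < (G.card:ℝ) := by push_cast; nlinarith
      have := Nat.cast_lt.mp this
      omega
    have ht := dBE h h3
    have htr : (G.card:ℝ) ≤ (P.card:ℝ) := by exact_mod_cast ht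
    have e1 : rbinom ((G.card:ℕ):ℝ) 2 = (G.card:ℝ)*((G.card:ℝ)-1)/2 := by
      rw [rbinom, Finset.prod_range_succ, Finset.prod_range_one]
      norm_num
    have e2 : rbinom (q+((2:ℕ):ℝ)-1) 2 = (q+1)*q/2 := by
      rw [rbinom, Finset.prod_range_succ, Finset.prod_range_one]
      norm_num
      ring
    rw [e1, e2]
    have hsub : (G.card:ℝ) - 1 = q^2 + q := by rw [hm1]; ring
    nlinarith [htr, hq, hsub, sq_nonneg q]
  | succ n hn ih =>
    intro G P q hq h hG
    have hG' : (G.card : ℝ) = q^2 + q + n := by rw [hG]; push_cast; ring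
    have hGpos : 1 ≤ G.card := by
      by_contra hc
      push_neg at hc
      have h0 : G.card = 0 := by omega
      rw [h0] at hG'
      push_cast at hG'
      nlinarith [hG', hq, Nat.cast_nonneg (α := ℝ) n]
    have hlinks : ∀ v ∈ G, (((G.erase v).card).choose n : ℝ) ≤
        ((P.filter (fun A => v ∈ A)).card : ℝ) * rbinom (q + n - 1) n := by
      intro v hv
      obtain ⟨hlk, hlc⟩ := link_lemma h hv
      have hcount : (((G.erase v).card):ℝ) = q^2+q+n-1 := by
        rw [Finset.card_erase_of_mem hv]
        rw [Nat.cast_sub hGpos, hG']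
        push_cast
        ring
      have hmain := ih (G.erase v) _ q hq hlk hcount
      rw [rbinom_nat_s11] at hmain
      rw [hlc] at hmain
      exact hmain
    have hstep := (step_lemma n hn G P q hq h hG' hlinks).1
    have hcast : q + ((n+1:ℕ):ℝ) - 1 = q + (n:ℝ) := by push_cast; ring
    rw [hcast]
    exact hstep
/-- for `r ≥ 3`, `n > r + 1`, `q > 0` real with `n = q² + q + r - 1`,
any clique partition `P` with `|P| = C(n,r)/C(q+r-1,r)` forces `q` to be a
positive integer and each member of `P` to have exactly `q + r - 1` elements
(so `P` is a Steiner `(n, q+r-1, r)`-system). -/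
theorem cp_equality_steiner (r n : ℕ) (hr : 3 ≤ r) (hn : r + 1 < n)
    (q : ℝ) (hq : 0 < q) (hnq : (n : ℝ) = q ^ 2 + q + r - 1)
    (P : Finset (Finset (Fin n))) (hP : IsCliquePartition n r P)
    (hcard : (P.card : ℝ) = rbinom (n : ℝ) r / rbinom (q + r - 1) r) :
    ∃ k : ℕ, 0 < k ∧ (k : ℝ) = q ∧ ∀ A ∈ P, A.card = k + r - 1 := by
  classical
  have hn2 : ((r:ℝ)) + 2 ≤ (n:ℝ) := by
    have : r + 2 ≤ n := by omega
    exact_mod_cast this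
  have hq1 : 1 < q := by nlinarith [hq, hnq, hn2]
  set G : Finset (Fin n) := Finset.univ with hGdef
  have hGcard : G.card = n := by simp [hGdef]
  have hcp : IsCPOn G r P := by
    constructor
    · intro A hA
      exact ⟨Finset.subset_univ A, hP.1 A hA⟩
    · intro S _ hS
      exact hP.2 S hS
  obtain ⟨s, rfl⟩ : ∃ s, r = s + 1 := ⟨r - 1, by omega⟩
  have hs : 2 ≤ s := by omega
  have hGr : (G.card:ℝ) = q^2 + q + s := by
    rw [hGcard, hnq]
    push_cast
    ring
  have hlinks : ∀ v ∈ G, (((G.erase v).card).choose s : ℝ) ≤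
      ((P.filter (fun A => v ∈ A)).card : ℝ) * rbinom (q + s - 1) s := by
    intro v hv
    obtain ⟨hlk, hlc⟩ := link_lemma hcp hv
    have hcount : (((G.erase v).card):ℝ) = q^2+q+s-1 := by
      rw [Finset.card_erase_of_mem hv]
      have h1 : 1 ≤ G.card := by
        rw [hGcard]; omega
      rw [Nat.cast_sub h1, hGr]
      ring
    have hmain := main_ineq s hs (G.erase v) _ q hq1 hlk hcount
    rw [rbinom_nat_s11] at hmain
    rw [hlc] at hmain
    exact hmain
  have hstep := step_lemma s hs G P q hq1 hcp hGr hlinks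
  have hqs : q + ((s+1:ℕ):ℝ) - 1 = q + (s:ℝ) := by push_cast; ring
  have hrbpos : 0 < rbinom (q + (s:ℝ)) (s+1) := by
    apply rbinom_pos
    push_cast
    nlinarith [hq1]
  have hPcard : (P.card:ℝ) * rbinom (q + (s:ℝ)) (s+1) = rbinom (n:ℝ) (s+1) := by
    rw [hcard, hqs]
    field_simp
  have hall : ∀ A ∈ P, (A.card:ℝ) = q + s := by
    intro A hA
    by_contra hbad
    have hstrict := hstep.2 A hA hbad
    rw [hGcard] at hstrict
    rw [hPcard] at hstrict
    exact lt_irrefl _ hstrict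
  have hPne : P.Nonempty := by
    have hcard' : s + 1 ≤ G.card := by
      rw [hGcard]; omega
    obtain ⟨S, hSsub, hScard⟩ := Finset.exists_subset_card_eq hcard'
    obtain ⟨A, ⟨hA, _⟩, _⟩ := hcp.2 S hSsub hScard
    exact ⟨A, hA⟩
  obtain ⟨A₀, hA₀⟩ := hPne
  have hA₀c : (A₀.card:ℝ) = q + s := hall A₀ hA₀
  have hge : s + 2 ≤ A₀.card := by
    have : ((s+1:ℕ):ℝ) < (A₀.card:ℝ) := by
      push_cast
      rw [hA₀c]
      linarith
    have := Nat.cast_lt.mp this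
    omega
  refine ⟨A₀.card - s, by omega, ?_, ?_⟩
  · rw [Nat.cast_sub (by omega : s ≤ A₀.card)]
    rw [hA₀c]
    ring
  · intro A hA
    have h1 : (A.card:ℝ) = (A₀.card:ℝ) := by rw [hall A hA, hA₀c]
    have h2 : A.card = A₀.card := Nat.cast_injective h1
    omega
end

section
/- cp(22, 3) = 77; that is, the minimum number of proper subsets A_1, ..., A_t ⊊ [22] such that every 3-element subset of [22] is contained in exactly one A_i equals 77. -/
set_option maxRecDepth 1000000
set_option maxHeartbeats 16000000

open Finset

/-- The Witt design S(3,6,22): 77 blocks of size 6. -/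
def wittBlocks : Finset (Finset (Fin 22)) :=
  {{4, 7, 10, 16, 17, 21},
   {0, 17, 18, 19, 20, 21},
   {3, 5, 11, 16, 18, 21},
   {3, 6, 12, 15, 17, 21},
   {1, 8, 12, 16, 20, 21},
   {4, 8, 9, 15, 18, 21},
   {0, 1, 2, 3, 4, 21},
   {3, 7, 9, 14, 20, 21},
   {2, 8, 11, 14, 17, 21},
   {0, 9, 10, 11, 12, 21},
   {0, 13, 14, 15, 16, 21},
   {1, 6, 10, 14, 18, 21},
   {0, 5, 6, 7, 8, 21},
   {2, 7, 12, 13, 18, 21},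
   {2, 5, 10, 15, 20, 21},
   {1, 5, 9, 13, 17, 21},
   {1, 7, 11, 15, 19, 21},
   {4, 5, 12, 14, 19, 21},
   {4, 6, 11, 13, 20, 21},
   {3, 8, 10, 13, 19, 21},
   {2, 6, 9, 16, 19, 21},
   {0, 1, 5, 10, 16, 19},
   {0, 1, 6, 9, 15, 20},
   {0, 1, 7, 12, 14, 17},
   {0, 1, 8, 11, 13, 18},
   {0, 2, 5, 9, 14, 18},
   {0, 2, 6, 10, 13, 17},
   {0, 2, 7, 11, 16, 20},
   {0, 2, 8, 12, 15, 19},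
   {0, 3, 5, 12, 13, 20},
   {0, 3, 6, 11, 14, 19},
   {0, 3, 7, 10, 15, 18},
   {0, 3, 8, 9, 16, 17},
   {0, 4, 5, 11, 15, 17},
   {0, 4, 6, 12, 16, 18},
   {0, 4, 7, 9, 13, 19},
   {0, 4, 8, 10, 14, 20},
   {1, 2, 5, 6, 11, 12},
   {1, 2, 7, 8, 9, 10},
   {1, 2, 13, 14, 19, 20},
   {1, 2, 15, 16, 17, 18},
   {1, 3, 5, 8, 14, 15},
   {1, 3, 6, 7, 13, 16},
   {1, 3, 9, 12, 18, 19},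
   {1, 3, 10, 11, 17, 20},
   {1, 4, 5, 7, 18, 20},
   {1, 4, 6, 8, 17, 19},
   {1, 4, 9, 11, 14, 16},
   {1, 4, 10, 12, 13, 15},
   {2, 3, 5, 7, 17, 19},
   {2, 3, 6, 8, 18, 20},
   {2, 3, 9, 11, 13, 15},
   {2, 3, 10, 12, 14, 16},
   {2, 4, 5, 8, 13, 16},
   {2, 4, 6, 7, 14, 15},
   {2, 4, 9, 12, 17, 20},
   {2, 4, 10, 11, 18, 19},
   {3, 4, 5, 6, 9, 10},
   {3, 4, 7, 8, 11, 12},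
   {3, 4, 13, 14, 17, 18},
   {3, 4, 15, 16, 19, 20},
   {5, 6, 13, 15, 18, 19},
   {5, 6, 14, 16, 17, 20},
   {5, 7, 9, 12, 15, 16},
   {5, 7, 10, 11, 13, 14},
   {5, 8, 9, 11, 19, 20},
   {5, 8, 10, 12, 17, 18},
   {6, 7, 9, 11, 17, 18},
   {6, 7, 10, 12, 19, 20},
   {6, 8, 9, 12, 13, 14},
   {6, 8, 10, 11, 15, 16},
   {7, 8, 13, 15, 17, 20},
   {7, 8, 14, 16, 18, 19},
   {9, 10, 13, 16, 18, 20},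
   {9, 10, 14, 15, 17, 19},
   {11, 12, 13, 16, 17, 19},
   {11, 12, 14, 15, 18, 20}}


lemma witt_card : wittBlocks.card = 77 := by decide

lemma witt_blocksize' : (wittBlocks.filter (fun A => A.card = 6)).card = 77 := by decide

lemma witt_blocksize : ∀ A ∈ wittBlocks, A.card = 6 := by
  have h : wittBlocks.filter (fun A => A.card = 6) = wittBlocks :=
    Finset.eq_of_subset_of_card_le (Finset.filter_subset _ wittBlocks)
      (by rw [witt_card, witt_blocksize'])
  intro A hA
  rw [← h] at hA
  exact (Finset.mem_filter.mp hA).2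

lemma witt_triples : ∀ x y z : Fin 22, x < y → y < z →
    (wittBlocks.filter (fun A => x ∈ A ∧ y ∈ A ∧ z ∈ A)).card = 1 := by decide

lemma witt_swap12 (x y z : Fin 22) :
    wittBlocks.filter (fun A => x ∈ A ∧ y ∈ A ∧ z ∈ A) =
    wittBlocks.filter (fun A => y ∈ A ∧ x ∈ A ∧ z ∈ A) :=
  Finset.filter_congr (fun A _ => by tauto)

lemma witt_swap23 (x y z : Fin 22) :
    wittBlocks.filter (fun A => x ∈ A ∧ y ∈ A ∧ z ∈ A) =
    wittBlocks.filter (fun A => x ∈ A ∧ z ∈ A ∧ y ∈ A) :=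
  Finset.filter_congr (fun A _ => by tauto)

lemma witt_triples' (x y z : Fin 22) (hxy : x ≠ y) (hxz : x ≠ z) (hyz : y ≠ z) :
    (wittBlocks.filter (fun A => x ∈ A ∧ y ∈ A ∧ z ∈ A)).card = 1 := by
  rcases lt_trichotomy x y with h1 | h1 | h1
  · rcases lt_trichotomy y z with h2 | h2 | h2
    · exact witt_triples x y z h1 h2
    · exact absurd h2 hyz
    · rcases lt_trichotomy x z with h3 | h3 | h3
      · rw [witt_swap23]; exact witt_triples x z y h3 h2
      · exact absurd h3 hxz
      · rw [witt_swap23, witt_swap12]; exact witt_triples z x y h3 h1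
  · exact absurd h1 hxy
  · rcases lt_trichotomy x z with h3 | h3 | h3
    · rw [witt_swap12]; exact witt_triples y x z h1 h3
    · exact absurd h3 hxz
    · rcases lt_trichotomy y z with h2 | h2 | h2
      · rw [witt_swap12, witt_swap23]; exact witt_triples y z x h2 h3
      · exact absurd h2 hyz
      · rw [witt_swap23, witt_swap12, witt_swap23]; exact witt_triples z y x h2 h1

lemma witt_partition : IsCliquePartition 22 3 wittBlocks := by
  constructor
  · intro A hA h
    have h6 := witt_blocksize A hA
    rw [h, Finset.card_univ, Fintype.card_fin] at h6
    omega
  · intro S hS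
    obtain ⟨x, y, z, hxy, hxz, hyz, rfl⟩ := Finset.card_eq_three.mp hS
    have h1 := witt_triples' x y z hxy hxz hyz
    obtain ⟨A, hA⟩ := Finset.card_eq_one.mp h1
    have hAmem : A ∈ wittBlocks.filter (fun A => x ∈ A ∧ y ∈ A ∧ z ∈ A) := by
      rw [hA]; exact Finset.mem_singleton_self A
    rw [Finset.mem_filter] at hAmem
    refine ⟨A, ⟨hAmem.1, ?_⟩, ?_⟩
    · intro a ha
      simp only [Finset.mem_insert, Finset.mem_singleton] at ha
      rcases ha with rfl | rfl | rfl
      · exact hAmem.2.1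
      · exact hAmem.2.2.1
      · exact hAmem.2.2.2
    · rintro B ⟨hB, hSB⟩
      have hBmem : B ∈ wittBlocks.filter (fun A => x ∈ A ∧ y ∈ A ∧ z ∈ A) :=
        Finset.mem_filter.mpr ⟨hB, hSB (by simp), hSB (by simp), hSB (by simp)⟩
      rw [hA, Finset.mem_singleton] at hBmem
      exact hBmem



lemma deBruijnErdos {α : Type*} [DecidableEq α] (V : Finset α) (L : Finset (Finset α))
    (hV : 2 ≤ V.card)
    (hprop : ∀ ℓ ∈ L, ℓ ⊂ V)
    (hcov : ∀ x ∈ V, ∀ y ∈ V, x ≠ y → ∃! ℓ, ℓ ∈ L ∧ x ∈ ℓ ∧ y ∈ ℓ) :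
    V.card ≤ L.card := by
  by_contra hcon
  push_neg at hcon
  set m := V.card with hm
  set t := L.card with ht
  classical
  set deg : α → ℕ := fun p => (L.filter (fun ℓ => p ∈ ℓ)).card with hdeg
  have hdeg_le : ∀ p, deg p ≤ t := fun p => Finset.card_le_card (filter_subset _ _)
  have hdeg1 : ∀ p ∈ V, 1 ≤ deg p := by
    intro p hp
    obtain ⟨q, hq, hqp⟩ := Finset.exists_mem_ne (show 1 < V.card by omega) p
    obtain ⟨ℓ, ⟨hℓL, hpℓ, hqℓ⟩, _⟩ := hcov p hp q hq (Ne.symm hqp)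
    have : ℓ ∈ L.filter (fun ℓ => p ∈ ℓ) := mem_filter.mpr ⟨hℓL, hpℓ⟩
    exact Finset.card_pos.mpr ⟨ℓ, this⟩
  have hkey : ∀ p ∈ V, ∀ ℓ ∈ L, p ∉ ℓ → ℓ.card ≤ deg p := by
    intro p hp ℓ hℓ hpℓ
    have hf : ∀ q : α, q ∈ ℓ → ∃ ℓ', ℓ' ∈ L ∧ p ∈ ℓ' ∧ q ∈ ℓ' := by
      intro q hq
      exact (hcov p hp q ((hprop ℓ hℓ).1 hq) (by rintro rfl; exact hpℓ hq)).exists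
    choose f hf1 hf2 hf3 using hf
    have hmaps : ∀ q ∈ ℓ, (if h : q ∈ ℓ then f q h else ∅) ∈ L.filter (fun ℓ' => p ∈ ℓ') := by
      intro q hq
      rw [dif_pos hq]
      exact mem_filter.mpr ⟨hf1 q hq, hf2 q hq⟩
    apply Finset.card_le_card_of_injOn _ hmaps
    intro q hq q' hq' heq
    simp only [Finset.mem_coe] at hq hq'
    simp only at heq
    rw [dif_pos hq, dif_pos hq'] at heq
    by_contra hne
    have h1 : f q hq = ℓ := by
      apply (hcov q ((hprop ℓ hℓ).1 hq) q' ((hprop ℓ hℓ).1 hq') hne).unique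
      · exact ⟨hf1 q hq, hf3 q hq, heq ▸ hf3 q' hq'⟩
      · exact ⟨hℓ, hq, hq'⟩
    exact hpℓ (h1 ▸ hf2 q hq)
  -- numeric part
  have hm2 : (2:ℕ) ≤ m := hV
  have ht1 : 1 ≤ t := by
    obtain ⟨p, hp⟩ := Finset.card_pos.mp (show 0 < V.card by omega)
    exact le_trans (hdeg1 p hp) (hdeg_le p)
  have hℓm : ∀ ℓ ∈ L, ℓ.card < m := fun ℓ hℓ => Finset.card_lt_card (hprop ℓ hℓ)
  have htQ : (0:ℚ) < (t:ℚ) := by exact_mod_cast ht1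
  have hmQ : (0:ℚ) < (m:ℚ) := by exact_mod_cast show 0 < m by omega
  set w : Finset α → ℚ := fun ℓ => 1 / ((t:ℚ) * ((m:ℚ) - (ℓ.card:ℚ))) with hw
  have hcard_not : ∀ ℓ, ℓ ⊆ V → (V.filter (fun p => p ∉ ℓ)).card = m - ℓ.card := by
    intro ℓ hsub
    have h1 : V.filter (fun p => p ∈ ℓ) = ℓ := by
      rw [Finset.filter_mem_eq_inter, Finset.inter_eq_right.mpr hsub]
    rw [Finset.filter_not, h1, Finset.card_sdiff_of_subset hsub]
  have hsum1 : ∑ ℓ ∈ L, ∑ p ∈ V, (if p ∈ ℓ then 0 else w ℓ) = 1 := by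
    have hinner : ∀ ℓ ∈ L, ∑ p ∈ V, (if p ∈ ℓ then 0 else w ℓ) = 1/(t:ℚ) := by
      intro ℓ hℓ
      rw [Finset.sum_ite, Finset.sum_const_zero, zero_add, Finset.sum_const,
        hcard_not ℓ (hprop ℓ hℓ).1, nsmul_eq_mul, Nat.cast_sub (le_of_lt (hℓm ℓ hℓ)), hw]
      have hne : (m:ℚ) - (ℓ.card:ℚ) ≠ 0 := by
        have : (ℓ.card:ℚ) < (m:ℚ) := by exact_mod_cast hℓm ℓ hℓ
        linarith
      field_simp
    rw [Finset.sum_congr rfl hinner, Finset.sum_const, nsmul_eq_mul, ← ht]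
    field_simp
  rw [Finset.sum_comm] at hsum1
  have hlt : ∑ p ∈ V, ∑ ℓ ∈ L, (if p ∈ ℓ then 0 else w ℓ) < 1 := by
    have hterm : ∀ p ∈ V, ∑ ℓ ∈ L, (if p ∈ ℓ then 0 else w ℓ) < 1/(m:ℚ) := by
      intro p hp
      have hd1 : 1 ≤ deg p := hdeg1 p hp
      have hdt : deg p ≤ t := hdeg_le p
      have hdm : deg p < m := lt_of_le_of_lt hdt hcon
      have hdQ : (0:ℚ) < (deg p : ℚ) := by exact_mod_cast hd1
      have hdmQ : ((deg p:ℚ)) < (m:ℚ) := by exact_mod_cast hdm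
      have htmQ : ((t:ℚ)) < (m:ℚ) := by exact_mod_cast hcon
      set u : ℚ := 1 / ((t:ℚ) * ((m:ℚ) - (deg p:ℚ))) with hu
      have hXpos : (0:ℚ) < (t:ℚ) * ((m:ℚ) - (deg p:ℚ)) := by
        apply mul_pos htQ; linarith
      have hstep1 : ∑ ℓ ∈ L, (if p ∈ ℓ then 0 else w ℓ) ≤ ∑ ℓ ∈ L, (if p ∈ ℓ then 0 else u) := by
        apply Finset.sum_le_sum
        intro ℓ hℓ
        split_ifs with hpl
        · exact le_refl _
        · rw [hw, hu]
          apply one_div_le_one_div_of_le hXpos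
          have hcd : (ℓ.card:ℚ) ≤ (deg p:ℚ) := by exact_mod_cast hkey p hp ℓ hℓ hpl
          have := le_of_lt htQ
          nlinarith
      have hstep2 : ∑ ℓ ∈ L, (if p ∈ ℓ then 0 else u) = ((t - deg p : ℕ):ℚ) * u := by
        rw [Finset.sum_ite, Finset.sum_const_zero, zero_add, Finset.sum_const, nsmul_eq_mul]
        congr 2
        have h1 : L.filter (fun ℓ => p ∈ ℓ) ⊆ L := filter_subset _ _
        rw [Finset.filter_not, Finset.card_sdiff_of_subset (filter_subset _ _)]
      have hstep3 : ((t - deg p : ℕ):ℚ) * u < 1/(m:ℚ) := by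
        rw [Nat.cast_sub hdt, hu, mul_one_div, div_lt_div_iff₀ hXpos hmQ]
        nlinarith
      calc ∑ ℓ ∈ L, (if p ∈ ℓ then 0 else w ℓ) ≤ _ := hstep1
        _ = _ := hstep2
        _ < 1/(m:ℚ) := hstep3
    have hne : V.Nonempty := Finset.card_pos.mp (show 0 < V.card by omega)
    calc ∑ p ∈ V, ∑ ℓ ∈ L, (if p ∈ ℓ then 0 else w ℓ) < ∑ p ∈ V, 1/(m:ℚ) :=
          Finset.sum_lt_sum_of_nonempty hne hterm
      _ = 1 := by rw [Finset.sum_const, nsmul_eq_mul, ← hm]; field_simp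
  rw [hsum1] at hlt
  exact lt_irrefl _ hlt


lemma choose_ineq (n : ℕ) : 90 * n ≤ 420 + 6 * n.choose 3 := by
  rw [show (6:ℕ) = Nat.factorial 3 from rfl, ← Nat.descFactorial_eq_factorial_mul_choose]
  match n with
  | 0 => decide
  | 1 => decide
  | 2 => decide
  | 3 => decide
  | 4 => decide
  | 5 => decide
  | 6 => decide
  | (m+7) =>
    have h : (m+7).descFactorial 3 = (m+5) * ((m+6) * ((m+7) * 1)) := by
      simp [Nat.descFactorial]
    rw [h]
    nlinarith [sq_nonneg m, Nat.zero_le m]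

lemma cp_lower (P : Finset (Finset (Fin 22))) (hP : IsCliquePartition 22 3 P) :
    77 ≤ P.card := by
  obtain ⟨hne, hcov⟩ := hP
  classical
  -- triple count
  have hdisj : ∀ A ∈ P, ∀ B ∈ P, A ≠ B →
      Disjoint (A.powersetCard 3) (B.powersetCard 3) := by
    intro A hA B hB hAB
    rw [Finset.disjoint_left]
    intro S hSA hSB
    rw [Finset.mem_powersetCard] at hSA hSB
    obtain ⟨C, _, h2⟩ := hcov S hSA.2
    exact hAB ((h2 A ⟨hA, hSA.1⟩).trans (h2 B ⟨hB, hSB.1⟩).symm)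
  have hbiUnion : P.biUnion (fun A => A.powersetCard 3) =
      (Finset.univ : Finset (Fin 22)).powersetCard 3 := by
    ext S
    simp only [Finset.mem_biUnion, Finset.mem_powersetCard, Finset.subset_univ, true_and]
    constructor
    · rintro ⟨A, _, _, h3⟩; exact h3
    · intro h3
      obtain ⟨A, ⟨hA, hSA⟩, _⟩ := hcov S h3
      exact ⟨A, hA, hSA, h3⟩
  have h1 : ∑ A ∈ P, (A.card).choose 3 = 1540 := by
    have hsum : ∑ A ∈ P, (A.card).choose 3 = ∑ A ∈ P, (A.powersetCard 3).card :=
      Finset.sum_congr rfl (fun A _ => (Finset.card_powersetCard 3 A).symm)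
    rw [hsum, ← Finset.card_biUnion hdisj, hbiUnion, Finset.card_powersetCard,
      Finset.card_univ, Fintype.card_fin]
    decide
  -- degrees
  have hdeg : ∀ x : Fin 22, 21 ≤ (P.filter (fun A => x ∈ A)).card := by
    intro x
    have hcard : ((Finset.univ : Finset (Fin 22)).erase x).card = 21 := by
      rw [Finset.card_erase_of_mem (Finset.mem_univ x), Finset.card_univ, Fintype.card_fin]
    have := deBruijnErdos ((Finset.univ : Finset (Fin 22)).erase x)
      ((P.filter (fun A => x ∈ A)).image (fun A => A.erase x))
      (by rw [hcard]; omega)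
      ?_ ?_
    · calc 21 = ((Finset.univ : Finset (Fin 22)).erase x).card := hcard.symm
        _ ≤ _ := this
        _ ≤ (P.filter (fun A => x ∈ A)).card := Finset.card_image_le
    · -- proper
      intro ℓ hℓ
      rw [Finset.mem_image] at hℓ
      obtain ⟨A, hA, rfl⟩ := hℓ
      rw [Finset.mem_filter] at hA
      constructor
      · exact Finset.erase_subset_erase x (Finset.subset_univ A)
      · intro hsup
        have hAu : A.card < 22 := by
          have h := Finset.card_le_card (Finset.subset_univ A)
          rw [Finset.card_univ, Fintype.card_fin] at h
          rcases lt_or_eq_of_le h with h' | h'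
          · exact h'
          · exact absurd (Finset.eq_univ_of_card A (by simp [h'])) (hne A hA.1)
        have h1 := Finset.card_le_card hsup
        rw [hcard, Finset.card_erase_of_mem hA.2] at h1
        omega
    · -- cover
      intro y hy z hz hyz
      rw [Finset.mem_erase] at hy hz
      have hScard : ({x, y, z} : Finset (Fin 22)).card = 3 := by
        rw [Finset.card_insert_of_notMem (by simp [Ne.symm hy.1, Ne.symm hz.1]),
          Finset.card_insert_of_notMem (by simp [hyz]), Finset.card_singleton]
      obtain ⟨A, ⟨hA, hSA⟩, huniq⟩ := hcov _ hScard
      have hxA : x ∈ A := hSA (by simp)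
      have hyA : y ∈ A := hSA (by simp)
      have hzA : z ∈ A := hSA (by simp)
      refine ⟨A.erase x, ⟨?_, ?_, ?_⟩, ?_⟩
      · exact Finset.mem_image_of_mem _ (Finset.mem_filter.mpr ⟨hA, hxA⟩)
      · exact Finset.mem_erase.mpr ⟨hy.1, hyA⟩
      · exact Finset.mem_erase.mpr ⟨hz.1, hzA⟩
      · rintro ℓ' ⟨hℓ', hyℓ', hzℓ'⟩
        rw [Finset.mem_image] at hℓ'
        obtain ⟨B, hB, rfl⟩ := hℓ'
        rw [Finset.mem_filter] at hB
        have hSB : ({x, y, z} : Finset (Fin 22)) ⊆ B := by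
          intro a ha
          simp only [Finset.mem_insert, Finset.mem_singleton] at ha
          rcases ha with rfl | rfl | rfl
          · exact hB.2
          · exact (Finset.erase_subset x B) hyℓ'
          · exact (Finset.erase_subset x B) hzℓ'
        rw [huniq B ⟨hB.1, hSB⟩]
  -- sum of sizes
  have h2 : 462 ≤ ∑ A ∈ P, A.card := by
    have hswap : ∑ A ∈ P, A.card = ∑ x : Fin 22, (P.filter (fun A => x ∈ A)).card := by
      simp only [Finset.card_filter]
      rw [Finset.sum_comm]
      apply Finset.sum_congr rfl
      intro A _
      rw [Finset.card_eq_sum_ones]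
      simp
    rw [hswap]
    calc (462:ℕ) = ∑ _x : Fin 22, 21 := by simp
      _ ≤ _ := Finset.sum_le_sum (fun x _ => hdeg x)
  -- combine
  have h3 : 90 * ∑ A ∈ P, A.card ≤ 420 * P.card + 6 * ∑ A ∈ P, (A.card).choose 3 := by
    rw [Finset.mul_sum, Finset.mul_sum]
    calc ∑ A ∈ P, 90 * A.card ≤ ∑ A ∈ P, (420 + 6 * (A.card).choose 3) :=
          Finset.sum_le_sum (fun A _ => choose_ineq A.card)
      _ = 420 * P.card + ∑ A ∈ P, 6 * (A.card).choose 3 := by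
          rw [Finset.sum_add_distrib, Finset.sum_const, smul_eq_mul, mul_comm]
  rw [h1] at h3
  omega


/-- `cp(22, 3) = 77`. -/
theorem cp_22_3 : cp 22 3 = 77 := by
  have hmem : 77 ∈ {t | ∃ P : Finset (Finset (Fin 22)), IsCliquePartition 22 3 P ∧ P.card = t} :=
    ⟨wittBlocks, witt_partition, witt_card⟩
  apply le_antisymm
  · exact Nat.sInf_le hmem
  · apply le_csInf ⟨77, hmem⟩
    rintro t ⟨P, hP, rfl⟩
    exact cp_lower P hP
end
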